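/- arXiv:2006.04167 — 6 statements merged into one kernel-verified Lean document; each statement's English description precedes it below -/
import Mathlib

section
/- Let q be a 0-CQ. Then for every ABox A, cov_A, A ⊨ q if and only if there is a homomorphism from q into A viewed as an interpretation; moreover, for every twinless ABox A, cov_A^⊥, A ⊨ q if and only if there is a homomorphism from q into A viewed as an interpretation. -/
attribute [local instance] Classical.propDecidable

namespace DS

/-- Ground/query atoms over binary-predicate alphabet `σ` and node type `α`:
unary predicates `F`, `T`, `A` and binary predicates `R r`. -/
inductive At (σ α : Type) : Type
  | F : α → At σ α
  | T : α → At σ α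
  | A : α → At σ α
  | R : σ → α → α → At σ α

namespace At

/-- Renaming of the nodes of an atom. -/
def map {σ α β : Type} (h : α → β) : At σ α → At σ β
  | .F a => .F (h a)
  | .T a => .T (h a)
  | .A a => .A (h a)
  | .R r a b => .R r (h a) (h b)

/-- The nodes occurring in an atom. -/
def vars {σ α : Type} : At σ α → Set α
  | .F a => {a}
  | .T a => {a}
  | .A a => {a}
  | .R _ a b => {a, b}

end At

/-- An interpretation over domain `δ`. -/
structure Interp (σ δ : Type) where
  FS : δ → Prop
  TS : δ → Prop
  AS : δ → Prop
  RS : σ → δ → δ → Prop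

/-- Truth of an atom in an interpretation. -/
def Interp.satAt {σ δ : Type} (I : Interp σ δ) : At σ δ → Prop
  | .F a => I.FS a
  | .T a => I.TS a
  | .A a => I.AS a
  | .R r a b => I.RS r a b

/-- `I ⊨ q`: there is a homomorphism from the Boolean CQ `q` into `I`. -/
def Interp.satCQ {σ δ V : Type} (I : Interp σ δ) (q : Set (At σ V)) : Prop :=
  ∃ h : V → δ, ∀ a ∈ q, I.satAt (At.map h a)

/-- An ABox viewed as an interpretation over its own individuals. -/
def toInterp {σ α : Type} (A : Set (At σ α)) : Interp σ α where
  FS a := At.F a ∈ A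
  TS a := At.T a ∈ A
  AS a := At.A a ∈ A
  RS r a b := At.R r a b ∈ A

/-- An individual is undecided if it is labelled `A` but neither `F` nor `T`. -/
def undecided {σ α : Type} (A : Set (At σ α)) (a : α) : Prop :=
  At.A a ∈ A ∧ At.F a ∉ A ∧ At.T a ∉ A

/-- The minimal model of `cov_A` and the ABox `A` determined by a choice `c` of
one of `F`/`T` for each undecided `A`-individual. -/
def minModel {σ α : Type} (A : Set (At σ α)) (c : α → Bool) : Interp σ α where
  FS a := At.F a ∈ A ∨ (undecided A a ∧ c a = true)
  TS a := At.T a ∈ A ∨ (undecided A a ∧ c a = false)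
  AS a := At.A a ∈ A
  RS r a b := At.R r a b ∈ A

/-- `F` and `T` are interpreted disjointly. -/
def disjointFT {σ δ : Type} (I : Interp σ δ) : Prop := ∀ d : δ, ¬ (I.FS d ∧ I.TS d)

/-- Certain answer to the OMQ `(cov_A, q)` over the ABox `A`:
`q` holds in every minimal model of `cov_A` and `A`. -/
def covACert {σ α V : Type} (A : Set (At σ α)) (q : Set (At σ V)) : Prop :=
  ∀ c : α → Bool, (minModel A c).satCQ q

/-- Certain answer to the OMQ `(cov_A^⊥, q)` over the ABox `A`:
`q` holds in every minimal model of `cov_A^⊥` and `A` (the minimal models of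
`cov_A` in which `F` and `T` are disjoint). -/
def covABotCert {σ α V : Type} (A : Set (At σ α)) (q : Set (At σ V)) : Prop :=
  ∀ c : α → Bool, disjointFT (minModel A c) → (minModel A c).satCQ q

/-- No `FT`-twin occurs. -/
def twinFree {σ α : Type} (A : Set (At σ α)) : Prop :=
  ∀ a : α, ¬ (At.F a ∈ A ∧ At.T a ∈ A)

/-- A CQ does not use the unary predicate `A`. -/
def noA {σ V : Type} (q : Set (At σ V)) : Prop := ∀ v : V, At.A v ∉ q

/-- `x` occurs in `q`. -/
def occ {σ V : Type} (q : Set (At σ V)) (x : V) : Prop := ∃ a ∈ q, x ∈ At.vars a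

/-- Connectedness of a CQ. -/
def connCQ {σ V : Type} (q : Set (At σ V)) : Prop :=
  ∀ x y : V, occ q x → occ q y →
    Relation.ReflTransGen (fun u v => ∃ a ∈ q, u ∈ At.vars a ∧ v ∈ At.vars a) x y

/-- Solitary `F`-node of a CQ. -/
def solF {σ V : Type} (q : Set (At σ V)) (x : V) : Prop := At.F x ∈ q ∧ At.T x ∉ q

/-- Solitary `T`-node of a CQ. -/
def solT {σ V : Type} (q : Set (At σ V)) (y : V) : Prop := At.T y ∈ q ∧ At.F y ∉ q

/-- A `0`-CQ: a CQ with no solitary `F`-node or no solitary `T`-node. -/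
def isZeroCQ {σ V : Type} (q : Set (At σ V)) : Prop :=
  (∀ x, ¬ solF q x) ∨ (∀ x, ¬ solT q x)

/-- Let `q` be a `0`-CQ. Then for every ABox `A`,
`cov_A, A ⊨ q` iff there is a homomorphism from `q` into `A` viewed as an
interpretation; moreover, for every twinless ABox `A`, `cov_A^⊥, A ⊨ q` iff there
is a homomorphism from `q` into `A` viewed as an interpretation. -/
theorem statement_1 {σ V : Type}
    (q : Set (At σ V)) (hqfin : q.Finite) (hqA : noA q) (hqconn : connCQ q)
    (h0 : isZeroCQ q) :
    (∀ (α : Type) (A : Set (At σ α)), A.Finite →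
        (covACert A q ↔ (toInterp A).satCQ q)) ∧
    (∀ (α : Type) (A : Set (At σ α)), A.Finite → twinFree A →
        (covABotCert A q ↔ (toInterp A).satCQ q)) := by
  have easy : ∀ (α : Type) (A : Set (At σ α)) (c : α → Bool),
      (toInterp A).satCQ q → (minModel A c).satCQ q := by
    rintro α A c ⟨h, hh⟩
    refine ⟨h, fun a ha => ?_⟩
    have hs := hh a ha
    cases a with
    | F x => exact Or.inl hs
    | T x => exact Or.inl hs
    | A x => exact hs
    | R r x y => exact hs
  have key : ∀ (α : Type) (A : Set (At σ α)),
      ((minModel A (fun _ => true)).satCQ q ∧ (minModel A (fun _ => false)).satCQ q) →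
      (toInterp A).satCQ q := by
    rintro α A ⟨⟨h1, hh1⟩, ⟨h2, hh2⟩⟩
    cases h0 with
    | inl hF =>
      refine ⟨h1, fun a ha => ?_⟩
      have hs := hh1 a ha
      cases a with
      | F x =>
        have hT : At.T x ∈ q := by
          by_contra hT; exact hF x ⟨ha, hT⟩
        have hTA : At.T (h1 x) ∈ A := by
          have := hh1 _ hT
          rcases this with h | ⟨_, hb⟩
          · exact h
          · exact absurd hb (by simp)
        rcases hs with h | ⟨hu, _⟩
        · exact h
        · exact absurd hTA hu.2.2
      | T x =>
        rcases hs with h | ⟨_, hb⟩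
        · exact h
        · exact absurd hb (by simp)
      | A x => exact absurd ha (hqA x)
      | R r x y => exact hs
    | inr hT =>
      refine ⟨h2, fun a ha => ?_⟩
      have hs := hh2 a ha
      cases a with
      | T x =>
        have hFq : At.F x ∈ q := by
          by_contra hFq; exact hT x ⟨ha, hFq⟩
        have hFA : At.F (h2 x) ∈ A := by
          have := hh2 _ hFq
          rcases this with h | ⟨_, hb⟩
          · exact h
          · exact absurd hb (by simp)
        rcases hs with h | ⟨hu, _⟩
        · exact h
        · exact absurd hFA hu.2.1
      | F x =>
        rcases hs with h | ⟨_, hb⟩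
        · exact h
        · exact absurd hb (by simp)
      | A x => exact absurd ha (hqA x)
      | R r x y => exact hs
  have disj : ∀ (α : Type) (A : Set (At σ α)), twinFree A →
      ∀ b : Bool, disjointFT (minModel A (fun _ => b)) := by
    rintro α A htf b d ⟨hFd, hTd⟩
    rcases hFd with hF | ⟨huF, hbF⟩
    · rcases hTd with hTm | ⟨huT, _⟩
      · exact htf d ⟨hF, hTm⟩
      · exact huT.2.1 hF
    · rcases hTd with hTm | ⟨huT, hbT⟩
      · exact huF.2.2 hTm
      · simp [hbF] at hbT
  constructor
  · intro α A _
    constructor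
    · intro hc
      exact key α A ⟨hc _, hc _⟩
    · intro hs c
      exact easy α A c hs
  · intro α A _ htf
    constructor
    · intro hc
      exact key α A ⟨hc _ (disj α A htf true), hc _ (disj α A htf false)⟩
    · intro hs c _
      exact easy α A c hs

end DS
end

section
/- Let Q = (O, q) with O ∈ {cov_A, cov_A^⊥} and q a 1-CQ. Then O, C ⊨ q for every cactus C ∈ K_Q. -/
attribute [local instance] Classical.propDecidable

namespace DS

/-- A `1`-CQ with unique solitary `F`-node `x` (and at least one solitary `T`). -/
def isOneCQ {σ V : Type} (q : Set (At σ V)) (x : V) : Prop :=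
  solF q x ∧ (∀ z, solF q z → z = x) ∧ (∃ y, solT q y)

/-- The class `K_Q` of cactuses for `Q = (O, q)` with `q` a `1`-CQ whose unique
solitary `F`-node is `x`: the least class of ABoxes (over the variables of `q`,
regarded as individuals) containing `q` and closed under budding, which replaces
a solitary `T(y)` by a fresh copy of `(q ∖ {F(x)}) ∪ {A(x)}` with `x` renamed to
`y` and all other variables fresh. -/
inductive Cactus {σ V : Type} (q : Set (At σ V)) (x : V) : Set (At σ V) → Prop
  | base : Cactus q x q
  | bud (C : Set (At σ V)) (hC : Cactus q x C) (y : V)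
      (hyT : At.T y ∈ C) (hyF : At.F y ∉ C)
      (ρ : V → V) (hinj : Function.Injective ρ) (hρx : ρ x = y)
      (hfresh : ∀ v : V, v ≠ x → ¬ occ C (ρ v)) :
      Cactus q x ((C \ {At.T y}) ∪ At.map ρ '' (insert (At.A x) (q \ {At.F x})))

/-- Let `Q = (O, q)` with `O ∈ {cov_A, cov_A^⊥}` and `q` a
`1`-CQ. Then `O, C ⊨ q` for every cactus `C ∈ K_Q`. -/
theorem statement_5 {σ V : Type} [Infinite V]
    (q : Set (At σ V)) (x : V)
    (hqfin : q.Finite) (hqA : noA q) (hqconn : connCQ q)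
    (h1 : isOneCQ q x) :
    ∀ C : Set (At σ V), Cactus q x C → covACert C q ∧ covABotCert C q := by
  have main : ∀ C : Set (At σ V), Cactus q x C → covACert C q := by
    intro C hC
    induction hC with
    | base =>
      intro c
      refine ⟨id, fun a ha => ?_⟩
      cases a with
      | F v => exact Or.inl ha
      | T v => exact Or.inl ha
      | A v => exact absurd ha (hqA v)
      | R r u v => exact ha
    | bud C hCc y hyT hyF ρ hinj hρx hfresh ih =>
      intro c
      set S : Set (At σ V) := insert (At.A x) (q \ {At.F x}) with hS
      set C' : Set (At σ V) := (C \ {At.T y}) ∪ At.map ρ '' S with hC'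
      have hFx : At.F x ∈ q := h1.1.1
      have hTx : At.T x ∉ q := h1.1.2
      have himgF : ∀ v : V, occ C v → At.F v ∉ At.map ρ '' S := by
        rintro v hv ⟨a, haS, hmap⟩
        cases a with
        | F u =>
          have huv : ρ u = v := by simpa [At.map] using hmap
          by_cases hux : u = x
          · subst hux
            rw [hS, Set.mem_insert_iff] at haS
            rcases haS with h | h
            · simp at h
            · exact h.2 rfl
          · exact hfresh u hux (huv ▸ hv)
        | T u => simp [At.map] at hmap
        | A u => simp [At.map] at hmap
        | R r u w => simp [At.map] at hmap
      have himgT : ∀ v : V, occ C v → At.T v ∉ At.map ρ '' S := by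
        rintro v hv ⟨a, haS, hmap⟩
        cases a with
        | T u =>
          have huv : ρ u = v := by simpa [At.map] using hmap
          by_cases hux : u = x
          · subst hux
            rw [hS, Set.mem_insert_iff] at haS
            rcases haS with h | h
            · simp at h
            · exact hTx h.1
          · exact hfresh u hux (huv ▸ hv)
        | F u => simp [At.map] at hmap
        | A u => simp [At.map] at hmap
        | R r u w => simp [At.map] at hmap
      have hoccy : occ C y := ⟨At.T y, hyT, rfl⟩
      have hAy' : At.A y ∈ C' :=
        Or.inr ⟨At.A x, Set.mem_insert _ _, by simp [At.map, hρx]⟩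
      have hFy' : At.F y ∉ C' := by
        rintro (hl | hr)
        · exact hyF hl.1
        · exact himgF y hoccy hr
      have hTy' : At.T y ∉ C' := by
        rintro (hl | hr)
        · exact hl.2 rfl
        · exact himgT y hoccy hr
      have hundy : undecided C' y := ⟨hAy', hFy', hTy'⟩
      by_cases hcy : c y = true
      · -- map the query onto the fresh bud via ρ
        refine ⟨ρ, fun a ha => ?_⟩
        cases a with
        | F v =>
          by_cases hvx : v = x
          · subst hvx
            have hy : Interp.satAt (minModel C' c) (At.F y) := Or.inr ⟨hundy, hcy⟩
            simpa only [At.map, hρx] using hy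
          · exact Or.inl (Or.inr ⟨At.F v,
              Set.mem_insert_of_mem _ ⟨ha, by simp [hvx]⟩, rfl⟩)
        | T v =>
          exact Or.inl (Or.inr ⟨At.T v,
            Set.mem_insert_of_mem _ ⟨ha, by simp⟩, rfl⟩)
        | A v => exact absurd ha (hqA v)
        | R r u w =>
          exact Set.mem_union_right _ ⟨At.R r u w,
            Set.mem_insert_of_mem _ ⟨ha, by simp⟩, rfl⟩
      · -- c y = false : reuse the homomorphism for C
        have hcy' : c y = false := by simpa using hcy
        have hundp : ∀ v : V, undecided C v → undecided C' v := by
          rintro v ⟨hA, hF, hT⟩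
          have hocc : occ C v := ⟨At.A v, hA, rfl⟩
          refine ⟨Or.inl ⟨hA, by simp⟩, ?_, ?_⟩
          · rintro (hl | hr)
            · exact hF hl.1
            · exact himgF v hocc hr
          · rintro (hl | hr)
            · exact hT hl.1
            · exact himgT v hocc hr
        have transF : ∀ v : V,
            At.F v ∈ C ∨ (undecided C v ∧ c v = true) →
            At.F v ∈ C' ∨ (undecided C' v ∧ c v = true) := by
          rintro v (hF | ⟨hund, hc⟩)
          · exact Or.inl (Or.inl ⟨hF, by simp⟩)
          · exact Or.inr ⟨hundp v hund, hc⟩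
        have transT : ∀ v : V,
            At.T v ∈ C ∨ (undecided C v ∧ c v = false) →
            At.T v ∈ C' ∨ (undecided C' v ∧ c v = false) := by
          rintro v (hT | ⟨hund, hc⟩)
          · by_cases hvy : v = y
            · subst hvy
              exact Or.inr ⟨hundy, hcy'⟩
            · exact Or.inl (Or.inl ⟨hT, by simp [hvy]⟩)
          · exact Or.inr ⟨hundp v hund, hc⟩
        obtain ⟨h, hh⟩ := ih c
        refine ⟨h, fun a ha => ?_⟩
        have hsat := hh a ha
        cases a with
        | F v => exact transF (h v) hsat
        | T v => exact transT (h v) hsat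
        | A v => exact absurd ha (hqA v)
        | R r u w => exact Set.mem_union_left _ ⟨hsat, by simp⟩
  exact fun C hC => ⟨main C hC, fun c _ => main C hC c⟩

end DS
end

section
/- Let q be a 1-CQ whose unique solitary F-node is x and whose solitary T-nodes are y_1, …, y_n, let O ∈ {cov_A, cov_A^⊥}, Q = (O, q), q′ = q ∖ {F(x), T(y_1), …, T(y_n)}, and let Π_Q be the datalog program with rules (1) G ← F(x) ∧ q′ ∧ P(y_1) ∧ … ∧ P(y_n); (2) P(x) ← T(x); (3) P(x) ← A(x) ∧ q′ ∧ P(y_1) ∧ … ∧ P(y_n); and, when O = cov_A^⊥ only, (4) G ← F(x) ∧ T(x), where P is a fresh unary predicate and G a nullary goal predicate. Then for every ABox A (not using P or G) the following are equivalent: (i) O, A ⊨ q; (ii) Π_Q, A ⊨ G; (iii) there is a homomorphism h : C → A for some cactus C ∈ K_Q, or O = cov_A^⊥ and A contains an FT-twin. -/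
attribute [local instance] Classical.propDecidable

namespace DS

/-- `q′ = q ∖ {F(x), T(y₁), …, T(yₙ)}`: the body of the datalog rules of `Π_Q`. -/
def qBody {σ V : Type} (q : Set (At σ V)) (x : V) : Set (At σ V) :=
  q \ (insert (At.F x) {a | ∃ z, solT q z ∧ a = At.T z})

/-- Derivability of the facts `P(a)` from the ABox `A` by rules (2) and (3) of
the datalog program `Π_Q`:  `P(x) ← T(x)` and `P(x) ← A(x), q′, P(y₁), …, P(yₙ)`. -/
inductive PDer {σ α V : Type} (A : Set (At σ α)) (q : Set (At σ V)) (x : V) : α → Prop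
  | fromT (a : α) : At.T a ∈ A → PDer A q x a
  | rule (h : V → α) (hA : At.A (h x) ∈ A)
      (hbody : ∀ b ∈ qBody q x, At.map h b ∈ A)
      (hP : ∀ z, solT q z → PDer A q x (h z)) : PDer A q x (h x)

/-- Derivability of the goal `G` from `A` via `Π_Q`: rule (1)
`G ← F(x), q′, P(y₁), …, P(yₙ)` and, when `bot = true` (the case `O = cov_A^⊥`),
also rule (4) `G ← F(x), T(x)`. -/
def GDer {σ α V : Type} (bot : Bool) (A : Set (At σ α)) (q : Set (At σ V)) (x : V) : Prop :=
  (∃ h : V → α, At.F (h x) ∈ A ∧ (∀ b ∈ qBody q x, At.map h b ∈ A) ∧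
      ∀ z, solT q z → PDer A q x (h z)) ∨
  (bot = true ∧ ∃ a, At.F a ∈ A ∧ At.T a ∈ A)

/-! ### Auxiliary lemmas -/

section Aux

variable {σ α V : Type}

lemma At.map_comp {β : Type} (g : V → β) (f : β → α) (b : At σ V) :
    At.map f (At.map g b) = At.map (f ∘ g) b := by
  cases b <;> rfl

lemma At.map_congr' {f g : V → α} (b : At σ V)
    (h : ∀ v ∈ At.vars b, f v = g v) : At.map f b = At.map g b := by
  cases b with
  | F a => simp [At.map, h a (by simp [At.vars])]
  | T a => simp [At.map, h a (by simp [At.vars])]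
  | A a => simp [At.map, h a (by simp [At.vars])]
  | R r a b =>
      simp [At.map, h a (by simp [At.vars]), h b (by simp [At.vars])]

lemma At.vars_finite (b : At σ V) : (At.vars b).Finite := by
  cases b with
  | F a => exact Set.finite_singleton a
  | T a => exact Set.finite_singleton a
  | A a => exact Set.finite_singleton a
  | R r a b => exact (Set.finite_singleton b).insert a

/-- The nodes occurring in an ABox. -/
def nds (C : Set (At σ V)) : Set V := {v | occ C v}

lemma nds_finite {C : Set (At σ V)} (hC : C.Finite) : (nds C).Finite := by
  have h : nds C = ⋃ b ∈ C, At.vars b := by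
    ext v; simp [nds, occ, Set.mem_iUnion]
  rw [h]
  exact hC.biUnion fun b _ => At.vars_finite b

open Cardinal in
lemma exists_fresh [Infinite V] (S : Set V) (hS : S.Finite) (x z : V) :
    ∃ ρ : V → V, Function.Injective ρ ∧ ρ x = z ∧ ∀ v, v ≠ x → ρ v ∉ S ∧ ρ v ≠ z := by
  classical
  have hS' : (insert z S).Finite := hS.insert z
  have h1 : #(insert z S : Set V) < #V :=
    lt_of_lt_of_le hS'.lt_aleph0 (Cardinal.aleph0_le_mk V)
  have h2 : #(↥(insert z S : Set V)ᶜ) = #V := Cardinal.mk_compl_of_infinite _ h1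
  obtain ⟨e⟩ : Nonempty (V ↪ ↥(insert z S : Set V)ᶜ) :=
    (Cardinal.le_def _ _).mp (le_of_eq h2.symm)
  refine ⟨Function.update (fun v => (e v).1) x z, ?_, ?_, ?_⟩
  · intro a b hab
    by_cases ha : a = x <;> by_cases hb : b = x
    · rw [ha, hb]
    · exfalso; subst ha
      rw [Function.update_self, Function.update_of_ne hb] at hab
      exact (e b).2 (by rw [← hab]; exact Set.mem_insert _ _)
    · exfalso; subst hb
      rw [Function.update_self, Function.update_of_ne ha] at hab
      exact (e a).2 (by rw [hab]; exact Set.mem_insert _ _)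
    · rw [Function.update_of_ne ha, Function.update_of_ne hb] at hab
      exact e.injective (Subtype.val_injective hab)
  · exact Function.update_self _ _ _
  · intro v hv
    rw [Function.update_of_ne hv]
    refine ⟨fun hmem => (e v).2 (Set.mem_insert_of_mem _ hmem),
      fun heq => (e v).2 (by rw [heq]; exact Set.mem_insert _ _)⟩

end Aux
section PDerN

variable {σ α V : Type}

/-- Stratified version of `PDer`. -/
def PDerN (A : Set (At σ α)) (q : Set (At σ V)) (x : V) : ℕ → α → Prop
  | 0, _ => False
  | n+1, a => At.T a ∈ A ∨ ∃ h : V → α, a = h x ∧ At.A (h x) ∈ A ∧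
      (∀ b ∈ qBody q x, At.map h b ∈ A) ∧ ∀ z, solT q z → PDerN A q x n (h z)

lemma PDerN.mono {A : Set (At σ α)} {q : Set (At σ V)} {x : V} :
    ∀ {m n : ℕ} {a : α}, m ≤ n → PDerN A q x m a → PDerN A q x n a := by
  intro m n
  induction n generalizing m with
  | zero => intro a hmn h; interval_cases m; exact h.elim
  | succ n ih =>
      intro a hmn h
      match m, h with
      | 0, h => exact h.elim
      | m+1, Or.inl h => exact Or.inl h
      | m+1, Or.inr ⟨h₀, hax, hA, hbody, hP⟩ =>
          exact Or.inr ⟨h₀, hax, hA, hbody, fun z hz =>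
            ih (Nat.succ_le_succ_iff.mp hmn) (hP z hz)⟩

lemma PDerN.toPDer {A : Set (At σ α)} {q : Set (At σ V)} {x : V} :
    ∀ {n : ℕ} {a : α}, PDerN A q x n a → PDer A q x a := by
  intro n
  induction n with
  | zero => intro a h; exact h.elim
  | succ n ih =>
      rintro a (h | ⟨h₀, rfl, hA, hbody, hP⟩)
      · exact PDer.fromT a h
      · exact PDer.rule h₀ hA hbody fun z hz => ih (hP z hz)

lemma solT_finite {q : Set (At σ V)} (hq : q.Finite) : {z | solT q z}.Finite := by
  have hsub : {z | solT q z} ⊆ At.T ⁻¹' q := fun z hz => hz.1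
  exact (hq.preimage fun a _ b _ h => by injection h).subset hsub

lemma PDer.toPDerN {A : Set (At σ α)} {q : Set (At σ V)} {x : V} (hq : q.Finite)
    {a : α} (h : PDer A q x a) : ∃ n, PDerN A q x n a := by
  induction h with
  | fromT a ha => exact ⟨1, Or.inl ha⟩
  | rule h₀ hA hbody hP ih =>
      classical
      choose f hf using ih
      set N : ℕ := (solT_finite hq).toFinset.sup
        (fun z => if hz : solT q z then f z hz else 0) with hN
      refine ⟨N + 1, Or.inr ⟨h₀, rfl, hA, hbody, fun z hz => ?_⟩⟩
      refine PDerN.mono ?_ (hf z hz)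
      have hzmem : z ∈ (solT_finite hq).toFinset := (Set.Finite.mem_toFinset _).mpr hz
      have hle := Finset.le_sup (b := z)
        (f := fun w => if hw : solT q w then f w hw else 0) hzmem
      simpa only [dif_pos hz, ← hN] using hle

end PDerN
section CactusFacts

variable {σ α V : Type}

lemma mem_qBody_iff {q : Set (At σ V)} {x : V} {b : At σ V} :
    b ∈ qBody q x ↔ b ∈ q ∧ b ≠ At.F x ∧ ∀ z, solT q z → b ≠ At.T z := by
  simp only [qBody, Set.mem_diff, Set.mem_insert_iff, Set.mem_setOf_eq]
  constructor
  · rintro ⟨hq, h⟩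
    exact ⟨hq, fun h' => h (Or.inl h'), fun z hz h' => h (Or.inr ⟨z, hz, h'⟩)⟩
  · rintro ⟨hq, h1, h2⟩
    exact ⟨hq, fun h => h.elim h1 fun ⟨z, hz, h'⟩ => h2 z hz h'⟩

lemma q_cases {q : Set (At σ V)} {x : V} {b : At σ V} (hb : b ∈ q) :
    b = At.F x ∨ b ∈ qBody q x ∨ ∃ z, solT q z ∧ b = At.T z := by
  classical
  by_cases h1 : b = At.F x
  · exact Or.inl h1
  by_cases h2 : ∃ z, solT q z ∧ b = At.T z
  · exact Or.inr (Or.inr h2)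
  · exact Or.inr (Or.inl (mem_qBody_iff.mpr
      ⟨hb, h1, fun z hz h' => h2 ⟨z, hz, h'⟩⟩))

lemma cactus_F_mem {q : Set (At σ V)} {x : V} {C : Set (At σ V)}
    (hFx : At.F x ∈ q) (hC : Cactus q x C) : At.F x ∈ C := by
  induction hC with
  | base => exact hFx
  | bud C hC y hyT hyF ρ hinj hρx hfresh ih =>
      exact Or.inl ⟨ih, by simp⟩

lemma cactus_finite {q : Set (At σ V)} {x : V} {C : Set (At σ V)}
    (hq : q.Finite) (hC : Cactus q x C) : C.Finite := by
  induction hC with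
  | base => exact hq
  | bud C hC y hyT hyF ρ hinj hρx hfresh ih =>
      exact ih.diff.union ((hq.diff.insert _).image _)

/-- Relaxed satisfaction: solitary `T`-atoms may be satisfied by `PDer` instead. -/
def relSat (A : Set (At σ α)) (q : Set (At σ V)) (x : V)
    (C : Set (At σ V)) (g : V → α) : Prop :=
  ∀ b ∈ C, At.map g b ∈ A ∨ ∃ z, b = At.T z ∧ At.F z ∉ C ∧ PDer A q x (g z)

/-- Lemma A: from relaxed satisfaction of a cactus, rule (1) data for `q`. -/
lemma lemA {A : Set (At σ α)} {q : Set (At σ V)} {x : V} {C : Set (At σ V)}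
    (hFx : At.F x ∈ q) (hTx : At.T x ∉ q) (hC : Cactus q x C) :
    ∀ g : V → α, relSat A q x C g →
      At.F (g x) ∈ A ∧ (∀ b ∈ qBody q x, At.map g b ∈ A) ∧
        ∀ z, solT q z → PDer A q x (g z) := by
  induction hC with
  | base =>
      intro g hg
      refine ⟨?_, ?_, ?_⟩
      · rcases hg (At.F x) hFx with h | ⟨z, hz, _⟩
        · exact h
        · exact absurd hz (by simp)
      · intro b hb
        rcases hg b (mem_qBody_iff.mp hb).1 with h | ⟨z, hz, hFz, _⟩
        · exact h
        · exact absurd hz ((mem_qBody_iff.mp hb).2.2 z ⟨hz ▸ (mem_qBody_iff.mp hb).1, hFz⟩)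
      · intro z hz
        rcases hg (At.T z) hz.1 with h | ⟨z', hz', _, hp⟩
        · exact PDer.fromT _ h
        · obtain rfl : z = z' := by injection hz'
          exact hp
  | bud C hC y hyT hyF ρ hinj hρx hfresh ih =>
      intro g hg
      set C' : Set (At σ V) :=
        (C \ {At.T y}) ∪ At.map ρ '' (insert (At.A x) (q \ {At.F x})) with hC'
      -- membership helpers for the copy
      have hcopy : ∀ b₁ ∈ insert (At.A x) (q \ {At.F x}), At.map ρ b₁ ∈ C' :=
        fun b₁ hb₁ => Or.inr ⟨b₁, hb₁, rfl⟩
      -- PDer (g y) via the copy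
      have hPy : PDer A q x (g y) := by
        have hA : At.A (g (ρ x)) ∈ A := by
          rcases hg _ (hcopy (At.A x) (Set.mem_insert _ _)) with h | ⟨z, hz, _⟩
          · exact h
          · exact absurd hz (by simp [At.map])
        have hbody : ∀ b ∈ qBody q x, At.map (g ∘ ρ) b ∈ A := by
          intro b hb
          obtain ⟨hbq, hbF, hbT⟩ := mem_qBody_iff.mp hb
          have hb' : At.map ρ b ∈ C' := hcopy b (Set.mem_insert_of_mem _ ⟨hbq, hbF⟩)
          rcases hg _ hb' with h | ⟨z, hz, hFz, _⟩
          · rwa [At.map_comp] at h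
          · -- b = T w with ρ w = z; then w is a twin, so F (ρ w) ∈ C', contradiction
            exfalso
            cases b with
            | T w =>
                have hzw : z = ρ w := by injection hz.symm
                have hwx : w ≠ x := fun h' => hTx (h' ▸ hbq)
                have hFw : At.F w ∈ q := by
                  by_contra hFw
                  exact hbT w ⟨hbq, hFw⟩ rfl
                exact hFz (hzw ▸ hcopy (At.F w)
                  (Set.mem_insert_of_mem _ ⟨hFw, by simp [hwx]⟩))
            | F w => simp [At.map] at hz
            | A w => simp [At.map] at hz
            | R r u v => simp [At.map] at hz
        have hP : ∀ z, solT q z → PDer A q x ((g ∘ ρ) z) := by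
          intro z hz
          have hzx : z ≠ x := fun h' => hTx (h' ▸ hz.1)
          have hb' : At.map ρ (At.T z) ∈ C' :=
            hcopy _ (Set.mem_insert_of_mem _ ⟨hz.1, by simp⟩)
          rcases hg _ hb' with h | ⟨z', hz', _, hp⟩
          · exact PDer.fromT _ h
          · obtain rfl : ρ z = z' := by injection hz'
            exact hp
        have := PDer.rule (A := A) (g ∘ ρ) (by simpa using hA) hbody hP
        simpa [hρx] using this
      -- relaxed satisfaction for the smaller cactus
      have hgC : relSat A q x C g := by
        intro b hb
        by_cases hby : b = At.T y
        · exact Or.inr ⟨y, hby, hyF, hPy⟩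
        · rcases hg b (Or.inl ⟨hb, hby⟩) with h | ⟨z, hz, hFz, hp⟩
          · exact Or.inl h
          · refine Or.inr ⟨z, hz, fun hFC => hFz (Or.inl ⟨hFC, by simp⟩), hp⟩
      exact ih g hgC

end CactusFacts
section LemB

variable {σ α V : Type}

/-- Relaxed satisfaction of an atom at level `n`. -/
def OKat (A : Set (At σ α)) (q : Set (At σ V)) (x : V) (n : ℕ)
    (C : Set (At σ V)) (g : V → α) (b : At σ V) : Prop :=
  At.map g b ∈ A ∨ ∃ z, b = At.T z ∧ At.F z ∉ C ∧ PDerN A q x n (g z)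

lemma mem_nds {C : Set (At σ V)} {v : V} {b : At σ V}
    (hb : b ∈ C) (hv : v ∈ At.vars b) : v ∈ nds C := by
  show occ C v
  exact ⟨b, hb, hv⟩

lemma OKat.mono {A : Set (At σ α)} {q : Set (At σ V)} {x : V} {m n : ℕ}
    {C : Set (At σ V)} {g : V → α} {b : At σ V} (hmn : m ≤ n) :
    OKat A q x m C g b → OKat A q x n C g b := by
  rintro (h | ⟨z, hz, hF, hp⟩)
  · exact Or.inl h
  · exact Or.inr ⟨z, hz, hF, hp.mono hmn⟩

/-- Lemma B: relaxed satisfaction of a cactus implies genuine satisfaction of a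
(possibly larger) cactus. -/
lemma lemB [Infinite V] {A : Set (At σ α)} {q : Set (At σ V)} {x : V}
    (hqfin : q.Finite) (hTx : At.T x ∉ q) :
    ∀ (n : ℕ) (C : Set (At σ V)) (g : V → α), Cactus q x C →
      (∀ b ∈ C, OKat A q x n C g b) →
      ∃ C' : Set (At σ V), Cactus q x C' ∧ ∃ h : V → α, ∀ b ∈ C', At.map h b ∈ A := by
  intro n
  induction n with
  | zero =>
      intro C g hC hok
      refine ⟨C, hC, g, fun b hb => ?_⟩
      rcases hok b hb with h | ⟨z, _, _, hp⟩
      · exact h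
      · exact hp.elim
  | succ n ih =>
      suffices H : ∀ (k : ℕ) (C : Set (At σ V)) (g : V → α), Cactus q x C →
          (∀ b ∈ C, OKat A q x (n+1) C g b) →
          {b ∈ C | ¬ OKat A q x n C g b}.ncard ≤ k →
          ∃ C' : Set (At σ V), Cactus q x C' ∧ ∃ h : V → α, ∀ b ∈ C', At.map h b ∈ A by
        intro C g hC hok
        exact H _ C g hC hok le_rfl
      intro k
      induction k with
      | zero =>
          intro C g hC hok hcard
          have hCfin : C.Finite := cactus_finite hqfin hC
          have hbadfin : {b ∈ C | ¬ OKat A q x n C g b}.Finite :=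
            hCfin.subset (Set.sep_subset _ _)
          have hempty : {b ∈ C | ¬ OKat A q x n C g b} = ∅ :=
            (Set.ncard_eq_zero hbadfin).mp (Nat.le_zero.mp hcard)
          refine ih C g hC fun b hb => ?_
          by_contra hnb
          have : b ∈ {b ∈ C | ¬ OKat A q x n C g b} := ⟨hb, hnb⟩
          rw [hempty] at this
          exact this
      | succ k ihk =>
          intro C g hC hok hcard
          have hCfin : C.Finite := cactus_finite hqfin hC
          have hbadfin : {b ∈ C | ¬ OKat A q x n C g b}.Finite :=
            hCfin.subset (Set.sep_subset _ _)
          by_cases hbad : ∀ b ∈ C, OKat A q x n C g b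
          · exact ih C g hC hbad
          push_neg at hbad
          obtain ⟨b₀, hb₀C, hb₀⟩ := hbad
          rcases hok b₀ hb₀C with hgen | ⟨z, rfl, hFzC, hpd⟩
          · exact absurd (Or.inl hgen) hb₀
          rcases hpd with hTA | ⟨h₀, hzx, hA₀, hbody₀, hP₀⟩
          · exact absurd (Or.inl (by simpa [At.map] using hTA)) hb₀
          -- fresh renaming
          obtain ⟨ρ, hinj, hρx, hρf⟩ := exists_fresh (nds C) (nds_finite hCfin) x z
          have hfresh : ∀ v : V, v ≠ x → ¬ occ C (ρ v) := fun v hv => (hρf v hv).1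
          set C' : Set (At σ V) :=
            (C \ {At.T z}) ∪ At.map ρ '' (insert (At.A x) (q \ {At.F x})) with hC'def
          have hC' : Cactus q x C' := Cactus.bud C hC z hb₀C hFzC ρ hinj hρx hfresh
          -- new assignment
          classical
          set g' : V → α :=
            fun v => if hv : ∃ u, ρ u = v then h₀ (Classical.choose hv) else g v with hg'def
          have hg'ρ : ∀ u, g' (ρ u) = h₀ u := by
            intro u
            have hv : ∃ u', ρ u' = ρ u := ⟨u, rfl⟩
            have := hinj (Classical.choose_spec hv)
            simp only [hg'def, dif_pos hv, this]
          have hzmem : z ∈ nds C := mem_nds hb₀C (by simp [At.vars])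
          have hg'C : ∀ v ∈ nds C, g' v = g v := by
            intro v hv
            by_cases hvz : v = z
            · calc g' v = g' (ρ x) := by rw [hρx, hvz]
                _ = h₀ x := hg'ρ x
                _ = g v := by rw [← hzx, hvz]
            · have hnv : ¬ ∃ u, ρ u = v := by
                rintro ⟨u, rfl⟩
                by_cases hux : u = x
                · exact hvz (hux ▸ hρx)
                · exact hfresh u hux hv
              simp only [hg'def, dif_neg hnv]
          have hmapC : ∀ b ∈ C, At.map g' b = At.map g b := fun b hb =>
            At.map_congr' b fun v hv => hg'C v (mem_nds hb hv)
          -- F-atoms of nodes of C are not created by the copy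
          have hFpres : ∀ z', z' ∈ nds C → At.F z' ∉ C → At.F z' ∉ C' := by
            intro z' hz' hFC hFC'
            rcases hFC' with ⟨hmem, _⟩ | ⟨b₁, hb₁, heq⟩
            · exact hFC hmem
            · rcases hb₁ with rfl | ⟨hb₁q, hb₁F⟩
              · simp [At.map] at heq
              · cases b₁ with
                | F u =>
                    have huz : ρ u = z' := by injection heq
                    have hux : u ≠ x := fun h => hb₁F (by rw [h]; rfl)
                    exact hfresh u hux (huz ▸ hz')
                | T u => simp [At.map] at heq
                | A u => simp [At.map] at heq
                | R r u v => simp [At.map] at heq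
          -- old atoms keep their OK status (at every level)
          have hold : ∀ (m : ℕ) (b : At σ V), b ∈ C → b ≠ At.T z →
              OKat A q x m C g b → OKat A q x m C' g' b := by
            intro m b hb hbz hok'
            rcases hok' with hgen | ⟨z', rfl, hz', hp⟩
            · exact Or.inl (by rw [hmapC b hb]; exact hgen)
            · have hz'mem : z' ∈ nds C := mem_nds hb (by simp [At.vars])
              refine Or.inr ⟨z', rfl, hFpres z' hz'mem hz', ?_⟩
              rw [hg'C z' hz'mem]
              exact hp
          -- copy atoms are OK at level n
          have hcopyOK : ∀ b' ∈ At.map ρ '' (insert (At.A x) (q \ {At.F x})),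
              OKat A q x n C' g' b' := by
            rintro _ ⟨b₁, hb₁, rfl⟩
            rcases hb₁ with rfl | ⟨hb₁q, hb₁F⟩
            · left
              rw [At.map_comp,
                At.map_congr' (f := g' ∘ ρ) (g := h₀) _ fun v _ => hg'ρ v]
              exact hA₀
            · have hb₁F' : b₁ ≠ At.F x := fun h => hb₁F (by rw [h]; rfl)
              by_cases hbody : b₁ ∈ qBody q x
              · left
                rw [At.map_comp,
                  At.map_congr' (f := g' ∘ ρ) (g := h₀) _ fun v _ => hg'ρ v]
                exact hbody₀ b₁ hbody
              · -- b₁ = T w with w solitary T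
                obtain ⟨w, hw, rfl⟩ : ∃ w, solT q w ∧ b₁ = At.T w := by
                  rcases q_cases hb₁q with h | h | ⟨w, hw, h⟩
                  · exact absurd h hb₁F'
                  · exact absurd h hbody
                  · exact ⟨w, hw, h⟩
                have hwx : w ≠ x := fun h => hTx (h ▸ hw.1)
                refine Or.inr ⟨ρ w, rfl, ?_, ?_⟩
                · intro hFC'
                  rcases hFC' with ⟨hmem, _⟩ | ⟨b₂, hb₂, heq⟩
                  · exact hfresh w hwx ⟨At.F (ρ w), hmem, by simp [At.vars]⟩
                  · rcases hb₂ with rfl | ⟨hb₂q, hb₂F⟩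
                    · simp [At.map] at heq
                    · cases b₂ with
                      | F u =>
                          have : ρ u = ρ w := by injection heq
                          have : u = w := hinj this
                          exact hw.2 (this ▸ hb₂q)
                      | T u => simp [At.map] at heq
                      | A u => simp [At.map] at heq
                      | R r u v => simp [At.map] at heq
                · rw [hg'ρ w]
                  exact hP₀ w hw
          -- relaxed satisfaction of C' at level n+1
          have hok' : ∀ b' ∈ C', OKat A q x (n+1) C' g' b' := by
            rintro b' (⟨hbC, hbz⟩ | hcp)
            · exact hold (n+1) b' hbC (by simpa using hbz) (hok b' hbC)
            · exact (hcopyOK b' hcp).mono (Nat.le_succ n)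
          -- the bad set shrinks
          have hsub : {b ∈ C' | ¬ OKat A q x n C' g' b} ⊆
              {b ∈ C | ¬ OKat A q x n C g b} \ {At.T z} := by
            rintro b' ⟨hb', hnb⟩
            rcases hb' with ⟨hbC, hbz⟩ | hcp
            · have hbz' : b' ≠ At.T z := by simpa using hbz
              refine ⟨⟨hbC, fun hokn => hnb (hold n b' hbC hbz' hokn)⟩, by simpa using hbz'⟩
            · exact absurd (hcopyOK b' hcp) hnb
          have hTzbad : At.T z ∈ {b ∈ C | ¬ OKat A q x n C g b} := ⟨hb₀C, hb₀⟩
          have hcard' : {b ∈ C' | ¬ OKat A q x n C' g' b}.ncard ≤ k := by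
            have h1 : {b ∈ C' | ¬ OKat A q x n C' g' b}.ncard ≤
                ({b ∈ C | ¬ OKat A q x n C g b} \ {At.T z}).ncard :=
              Set.ncard_le_ncard hsub hbadfin.diff
            have h2 : ({b ∈ C | ¬ OKat A q x n C g b} \ {At.T z}).ncard =
                {b ∈ C | ¬ OKat A q x n C g b}.ncard - 1 :=
              Set.ncard_diff_singleton_of_mem hTzbad
            omega
          exact ihk C' g' hC' hok' hcard'

end LemB
section Models

variable {σ α V : Type}

lemma minModel_FS_TS {A : Set (At σ α)} {c : α → Bool} {a : α} :
    (minModel A c).FS a ∧ (minModel A c).TS a ↔ At.F a ∈ A ∧ At.T a ∈ A := by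
  constructor
  · rintro ⟨hF | ⟨hu, hc⟩, hT | ⟨hu', hc'⟩⟩
    · exact ⟨hF, hT⟩
    · exact absurd hF hu'.2.1
    · exact absurd hT hu.2.2
    · rw [hc] at hc'; exact absurd hc' (by simp)
  · rintro ⟨hF, hT⟩
    exact ⟨Or.inl hF, Or.inl hT⟩

lemma minModel_FS_or_TS {A : Set (At σ α)} {c : α → Bool} {a : α}
    (hA : At.A a ∈ A) : (minModel A c).FS a ∨ (minModel A c).TS a := by
  classical
  by_cases hF : At.F a ∈ A
  · exact Or.inl (Or.inl hF)
  by_cases hT : At.T a ∈ A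
  · exact Or.inr (Or.inl hT)
  rcases Bool.eq_false_or_eq_true (c a) with hc | hc
  · exact Or.inl (Or.inr ⟨⟨hA, hF, hT⟩, hc⟩)
  · exact Or.inr (Or.inr ⟨⟨hA, hF, hT⟩, hc⟩)


lemma minModel_of_mem {A : Set (At σ α)} {c : α → Bool} {b : At σ α}
    (hb : b ∈ A) : (minModel A c).satAt b := by
  cases b with
  | F a => exact Or.inl hb
  | T a => exact Or.inl hb
  | A a => exact hb
  | R r a b => exact hb

/-- From `PDer` to truth in any minimal model: either the node is `T` there,
or the query is satisfied. -/
lemma pder_model {A : Set (At σ α)} {q : Set (At σ V)} {x : V}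
    (hFx : At.F x ∈ q) (hqA : noA q) (c : α → Bool) {a : α}
    (hp : PDer A q x a) :
    (minModel A c).TS a ∨ (minModel A c).satCQ q := by
  classical
  induction hp with
  | fromT a ha => exact Or.inl (Or.inl ha)
  | rule h₀ hA hbody hP ihP =>
      by_cases hsat : (minModel A c).satCQ q
      · exact Or.inr hsat
      have hTall : ∀ z, solT q z → (minModel A c).TS (h₀ z) := fun z hz =>
        (ihP z hz).resolve_right hsat
      rcases minModel_FS_or_TS (c := c) hA with hFS | hTS
      · -- build a homomorphism, contradiction with hsat
        exfalso
        apply hsat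
        refine ⟨h₀, fun b hb => ?_⟩
        rcases q_cases (x := x) hb with rfl | hb' | ⟨z, hz, rfl⟩
        · exact hFS
        · exact minModel_of_mem (hbody b hb')
        · exact hTall z hz
      · exact Or.inl hTS

/-- (ii) → (i): derivability of `G` implies certain answers. -/
lemma gder_sat {A : Set (At σ α)} {q : Set (At σ V)} {x : V}
    (hFx : At.F x ∈ q) (hqA : noA q) {bot : Bool}
    (hG : GDer bot A q x) (c : α → Bool)
    (hd : bot = true → disjointFT (minModel A c)) :
    (minModel A c).satCQ q := by
  classical
  rcases hG with ⟨h, hF, hbody, hP⟩ | ⟨hbot, a, hFa, hTa⟩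
  · by_cases hsat : (minModel A c).satCQ q
    · exact hsat
    have hTall : ∀ z, solT q z → (minModel A c).TS (h z) := fun z hz =>
      ((pder_model hFx hqA c (hP z hz)).resolve_right hsat)
    refine ⟨h, fun b hb => ?_⟩
    rcases q_cases (x := x) hb with rfl | hb' | ⟨z, hz, rfl⟩
    · exact Or.inl hF
    · exact minModel_of_mem (hbody b hb')
    · exact hTall z hz
  · exact absurd ⟨Or.inl hFa, Or.inl hTa⟩ (hd hbot a)

/-- (i) → (ii), contrapositive form: if `G` is not derivable then there is a
minimal model (disjoint in the `⊥` case) falsifying `q`. -/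
lemma not_gder_countermodel {A : Set (At σ α)} {q : Set (At σ V)} {x : V}
    (hFx : At.F x ∈ q) (hqA : noA q)
    (huniq : ∀ z, solF q z → z = x) {bot : Bool}
    (hG : ¬ GDer bot A q x) :
    ∃ c : α → Bool, (bot = true → disjointFT (minModel A c)) ∧
      ¬ (minModel A c).satCQ q := by
  classical
  set c : α → Bool := fun a => if PDer A q x a then false else true with hc
  have hTS_pder : ∀ a, (minModel A c).TS a → PDer A q x a := by
    rintro a (hT | ⟨hu, hcf⟩)
    · exact PDer.fromT a hT
    · by_contra hp
      rw [hc] at hcf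
      simp only [if_neg hp] at hcf
      exact Bool.noConfusion hcf
  have hFS_cases : ∀ a, (minModel A c).FS a → At.F a ∈ A ∨ (At.A a ∈ A ∧ ¬ PDer A q x a) := by
    rintro a (hF | ⟨hu, hct⟩)
    · exact Or.inl hF
    · refine Or.inr ⟨hu.1, fun hp => ?_⟩
      rw [hc] at hct
      simp only [if_pos hp] at hct
      exact Bool.noConfusion hct
  have hnsat : ¬ (minModel A c).satCQ q := by
    rintro ⟨g, hg⟩
    -- all body atoms are genuinely in A
    have hbody : ∀ b ∈ qBody q x, At.map g b ∈ A := by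
      intro b hb
      obtain ⟨hbq, hbF, hbT⟩ := mem_qBody_iff.mp hb
      have hsat := hg b hbq
      cases b with
      | F u =>
          have hux : u ≠ x := fun h => hbF (by rw [h])
          have hTu : At.T u ∈ q := by
            by_contra hTu
            exact hux (huniq u ⟨hbq, hTu⟩)
          have hsatT := hg (At.T u) hTu
          exact (minModel_FS_TS.mp ⟨hsat, hsatT⟩).1
      | T u =>
          have hFu : At.F u ∈ q := by
            by_contra hFu
            exact hbT u ⟨hbq, hFu⟩ rfl
          have hsatF := hg (At.F u) hFu
          exact (minModel_FS_TS.mp ⟨hsatF, hsat⟩).2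
      | A u => exact absurd hbq (hqA u)
      | R r u v => exact hsat
    have hP : ∀ z, solT q z → PDer A q x (g z) := fun z hz =>
      hTS_pder (g z) (hg (At.T z) hz.1)
    have hFgx : At.F (g x) ∈ A := by
      rcases hFS_cases (g x) (hg (At.F x) hFx) with h | ⟨hA, hnp⟩
      · exact h
      · exact absurd (PDer.rule g hA hbody hP) hnp
    exact hG (Or.inl ⟨g, hFgx, hbody, hP⟩)
  refine ⟨c, fun hbot a hfs => ?_, hnsat⟩
  obtain ⟨hFa, hTa⟩ := minModel_FS_TS.mp hfs
  exact hG (Or.inr ⟨hbot, a, hFa, hTa⟩)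

end Models
/-- Let `q` be a `1`-CQ with unique solitary `F`-node `x`, let
`O` be `cov_A` (`bot = false`) or `cov_A^⊥` (`bot = true`) and let `Π_Q` be the
datalog program with rules (1)–(3) and, for `cov_A^⊥` only, (4). Then for every
ABox `A` the following are equivalent: (i) `O, A ⊨ q`; (ii) `Π_Q, A ⊨ G`;
(iii) some cactus `C ∈ K_Q` maps homomorphically into `A`, or `O = cov_A^⊥` and
`A` contains an `FT`-twin. -/
theorem statement_6 {σ α V : Type} [Infinite V]
    (q : Set (At σ V)) (x : V)
    (hqfin : q.Finite) (hqA : noA q) (hqconn : connCQ q)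
    (h1 : isOneCQ q x)
    (bot : Bool) (A : Set (At σ α)) (hAfin : A.Finite) :
    ((if bot = true then covABotCert A q else covACert A q) ↔ GDer bot A q x) ∧
    (GDer bot A q x ↔
      ((∃ C : Set (At σ V), Cactus q x C ∧ ∃ h : V → α, ∀ b ∈ C, At.map h b ∈ A) ∨
        (bot = true ∧ ∃ a, At.F a ∈ A ∧ At.T a ∈ A))) := by
  classical
  obtain ⟨⟨hFx, hTx⟩, huniq, hexT⟩ := h1
  have hiff2 : GDer bot A q x ↔
      ((∃ C : Set (At σ V), Cactus q x C ∧ ∃ h : V → α, ∀ b ∈ C, At.map h b ∈ A) ∨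
        (bot = true ∧ ∃ a, At.F a ∈ A ∧ At.T a ∈ A)) := by
    constructor
    · rintro (⟨h, hF, hbody, hP⟩ | htwin)
      · left
        have hPn : ∀ z, solT q z → ∃ n, PDerN A q x n (h z) := fun z hz =>
          (hP z hz).toPDerN hqfin
        choose f hf using hPn
        set N : ℕ := (solT_finite hqfin).toFinset.sup
          (fun z => if hz : solT q z then f z hz else 0) with hN
        have hok : ∀ b ∈ q, OKat A q x N q h b := by
          intro b hb
          rcases q_cases (x := x) hb with rfl | hb' | ⟨z, hz, rfl⟩
          · exact Or.inl hF
          · exact Or.inl (hbody b hb')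
          · refine Or.inr ⟨z, rfl, hz.2, ?_⟩
            refine (hf z hz).mono ?_
            have hzmem : z ∈ (solT_finite hqfin).toFinset :=
              (Set.Finite.mem_toFinset _).mpr hz
            have hle := Finset.le_sup (b := z)
              (f := fun w => if hw : solT q w then f w hw else 0) hzmem
            simpa only [dif_pos hz, ← hN] using hle
        exact lemB hqfin hTx N q h Cactus.base hok
      · exact Or.inr htwin
    · rintro (⟨C, hC, h, hhom⟩ | htwin)
      · obtain ⟨hF, hbody, hP⟩ :=
          lemA hFx hTx hC h (fun b hb => Or.inl (hhom b hb))
        exact Or.inl ⟨h, hF, hbody, hP⟩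
      · exact Or.inr htwin
  refine ⟨?_, hiff2⟩
  cases bot with
  | false =>
      simp only [Bool.false_eq_true, if_false]
      constructor
      · intro hcert
        by_contra hG
        obtain ⟨c, _, hnsat⟩ := not_gder_countermodel hFx hqA huniq hG
        exact hnsat (hcert c)
      · intro hG c
        exact gder_sat hFx hqA hG c (by simp)
  | true =>
      simp only [if_pos rfl]
      constructor
      · intro hcert
        by_contra hG
        obtain ⟨c, hd, hnsat⟩ := not_gder_countermodel hFx hqA huniq hG
        exact hnsat (hcert c (hd rfl))
      · intro hG c hdis
        exact gder_sat hFx hqA hG c (fun _ => hdis)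

end DS
end

section
/- Let q = q_{0r} be a right-periodic twinless path 1-CQ with r ≥ 2, Q = (cov_A, q), and C ∈ K_Q^min. Call a node of C a T-copy if it is a copy of one of the T-nodes x_1, …, x_r of q; in C every T-copy is either labelled A (if it was budded), labelled T, or unlabelled (if it was pruned). Then: if some T-copy u is unlabelled in C, there is no T-copy v labelled by T such that there is a directed path from u to v in C. -/
attribute [local instance] Classical.propDecidable

namespace DS

/-- The path CQ with `m` edges labelled `ρ 0, …, ρ (m-1)` along the nodes
`0, 1, …, m`, whose `F`-nodes are the elements of `FL` and whose `T`-nodes are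
the elements of `TL`. -/
def pathCQ (σ : Type) (m : ℕ) (ρ : ℕ → σ) (FL TL : Set ℕ) : Set (At σ ℕ) :=
  {a | (∃ i, i < m ∧ a = At.R (ρ i) i (i + 1)) ∨
       (∃ i ∈ FL, a = At.F i) ∨ (∃ i ∈ TL, a = At.T i)}
/-- A twinless path `1`-CQ `q = q_{0r}` (single `F`-node `x0`, all `T`-nodes
after it) is right-periodic: either `r = 1`, or the `T`-nodes succeeding `x0`
are `x0 + p, x0 + 2p, …, x0 + r·p` for some period `p` and the word of edge
labels is periodic with period `p` from `x0` onwards (which encodes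
`r_1 = … = r_r` and `r_{r+1} = (r_1)^k λ` for a prefix `λ` of `r_1`). -/
def rightPeriodic (σ : Type) (m x0 : ℕ) (ρ : ℕ → σ) (TL : Set ℕ) : Prop :=
  (∀ t ∈ TL, x0 < t) ∧
  (TL.ncard = 1 ∨
    ∃ p, 0 < p ∧ TL = {x | ∃ k, 1 ≤ k ∧ k ≤ TL.ncard ∧ x = x0 + k * p} ∧
      ∀ i, x0 ≤ i → i + p < m → ρ (i + p) = ρ i)

/-- The mirror image of `rightPeriodic`: all `T`-nodes precede the single
`F`-node `x0` and the labels are periodic towards the left end. -/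
def leftPeriodic (σ : Type) (m x0 : ℕ) (ρ : ℕ → σ) (TL : Set ℕ) : Prop :=
  (∀ t ∈ TL, t < x0) ∧
  (TL.ncard = 1 ∨
    ∃ p, 0 < p ∧ TL = {x | ∃ k, 1 ≤ k ∧ k ≤ TL.ncard ∧ x + k * p = x0} ∧
      ∀ i, i + p < x0 → ρ (i + p) = ρ i)
/-- The class `K_Q^+` of cactuses for `Q = (cov_A, q)` (`q` a `1`-CQ over the
variables `ℕ` with unique solitary `F`-node `x`), together with bookkeeping
data: the skeleton `S` (the set of addresses of segments, an address being the
list of budded nodes leading to the segment), the segment address `seg v` of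
each node `v`, and the set `tc` of `T`-copies (copies of solitary `T`-nodes of
`q`).  Rule `bud` is budding; rule `prune` removes a solitary `T(y)` provided
the result still entails `q` under `cov_A` (the skeleton is unchanged). -/
inductive CacP {σ : Type} (q : Set (At σ ℕ)) (x : ℕ) :
    Set (At σ ℕ) → Set (List ℕ) → (ℕ → List ℕ) → Set ℕ → Prop
  | base : CacP q x q {[]} (fun _ => []) {v | solT q v}
  | bud (C : Set (At σ ℕ)) (S : Set (List ℕ)) (seg : ℕ → List ℕ) (tc : Set ℕ)
      (hC : CacP q x C S seg tc) (y : ℕ)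
      (hyT : At.T y ∈ C) (hyF : At.F y ∉ C)
      (ρ : ℕ → ℕ) (hinj : Function.Injective ρ) (hρx : ρ x = y)
      (hfresh : ∀ v : ℕ, v ≠ x → ¬ occ C (ρ v)) :
      CacP q x ((C \ {At.T y}) ∪ At.map ρ '' (insert (At.A x) (q \ {At.F x})))
        (insert (seg y ++ [y]) S)
        (fun v => if v ∈ Set.range ρ ∧ v ≠ y then seg y ++ [y] else seg v)
        (tc ∪ ρ '' {v | solT q v})
  | prune (C : Set (At σ ℕ)) (S : Set (List ℕ)) (seg : ℕ → List ℕ) (tc : Set ℕ)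
      (hC : CacP q x C S seg tc) (y : ℕ)
      (hyT : At.T y ∈ C) (hyF : At.F y ∉ C)
      (hent : covACert (C \ {At.T y}) q) :
      CacP q x (C \ {At.T y}) S seg tc

/-- `s` and `t` are incomparable nodes of a skeleton (neither is an ancestor,
i.e. a prefix, of the other). -/
def incomp (s t : List ℕ) : Prop := ¬ s <+: t ∧ ¬ t <+: s

/-- The full binary tree of depth `d` is a minor of the skeleton `S`: there is a
topological embedding sending each node of the binary tree (a `Bool`-word of
length at most `d`) to a node of `S`, children to strict descendants, and the
two children of a node to incomparable nodes. -/
def binMinor (S : Set (List ℕ)) (d : ℕ) : Prop :=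
  ∃ e : List Bool → List ℕ,
    (∀ l : List Bool, l.length ≤ d → e l ∈ S) ∧
    (∀ (l : List Bool) (b : Bool), l.length < d →
      e l <+: e (l ++ [b]) ∧ e l ≠ e (l ++ [b])) ∧
    (∀ l : List Bool, l.length < d → incomp (e (l ++ [true])) (e (l ++ [false])))

/-- The branching number of the skeleton `S` is at most `n`: the largest full
binary tree that is a minor of `S` has depth at most `n`. -/
def brLE (S : Set (List ℕ)) (n : ℕ) : Prop := ¬ binMinor S (n + 1)

/-! ### Auxiliary development for Statement 11 -/

section Aux

variable {σ : Type}

lemma At.map_id' (a : At σ ℕ) : At.map (fun x => x) a = a := by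
  cases a <;> rfl

lemma occ_of_mem {C : Set (At σ ℕ)} {a : At σ ℕ} (h : a ∈ C) {x : ℕ}
    (hx : x ∈ At.vars a) : occ C x := ⟨a, h, hx⟩

lemma occ_F {C : Set (At σ ℕ)} {x : ℕ} (h : At.F x ∈ C) : occ C x :=
  occ_of_mem h (by simp [At.vars])

lemma occ_T {C : Set (At σ ℕ)} {x : ℕ} (h : At.T x ∈ C) : occ C x :=
  occ_of_mem h (by simp [At.vars])

lemma occ_A {C : Set (At σ ℕ)} {x : ℕ} (h : At.A x ∈ C) : occ C x :=
  occ_of_mem h (by simp [At.vars])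

lemma occ_R_left {C : Set (At σ ℕ)} {s : σ} {x y : ℕ} (h : At.R s x y ∈ C) : occ C x :=
  occ_of_mem h (by simp [At.vars])

lemma occ_R_right {C : Set (At σ ℕ)} {s : σ} {x y : ℕ} (h : At.R s x y ∈ C) : occ C y :=
  occ_of_mem h (by simp [At.vars])

variable {m x0 : ℕ} {ρl : ℕ → σ} {TL : Set ℕ}

lemma pathCQ_F_mem {a : ℕ} : At.F a ∈ pathCQ σ m ρl {x0} TL ↔ a = x0 := by
  simp [pathCQ, eq_comm]

lemma pathCQ_T_mem {a : ℕ} : At.T a ∈ pathCQ σ m ρl {x0} TL ↔ a ∈ TL := by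
  simp [pathCQ]

lemma pathCQ_A_mem {a : ℕ} : At.A a ∉ pathCQ σ m ρl {x0} TL := by
  simp [pathCQ]

lemma pathCQ_R_mem {s : σ} {a b : ℕ} :
    At.R s a b ∈ pathCQ σ m ρl {x0} TL ↔ ∃ i, i < m ∧ s = ρl i ∧ a = i ∧ b = i + 1 := by
  simp [pathCQ]

lemma pathCQ_cases {a : At σ ℕ} (h : a ∈ pathCQ σ m ρl {x0} TL) :
    (∃ i, i < m ∧ a = At.R (ρl i) i (i + 1)) ∨ a = At.F x0 ∨ (∃ t ∈ TL, a = At.T t) := by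
  rcases h with h | h | h
  · exact Or.inl h
  · rcases h with ⟨i, hi, rfl⟩; simp at hi; subst hi; exact Or.inr (Or.inl rfl)
  · rcases h with ⟨i, hi, rfl⟩; exact Or.inr (Or.inr ⟨i, hi, rfl⟩)

lemma solT_pathCQ (hx0TL : x0 ∉ TL) {v : ℕ} :
    solT (pathCQ σ m ρl {x0} TL) v ↔ v ∈ TL := by
  unfold solT
  rw [pathCQ_T_mem, pathCQ_F_mem]
  constructor
  · exact fun h => h.1
  · intro h; exact ⟨h, fun hv => hx0TL (hv ▸ h)⟩

end Aux
section Inv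

variable {σ : Type}

/-- Edge relation of an ABox. -/
def edg (C : Set (At σ ℕ)) (a b : ℕ) : Prop := ∃ s, At.R s a b ∈ C

/-- `z` lies in an unlabelled "prefix" region: every node from which `z` is
reachable carries no `F`/`A` label and is not a `T`-copy. -/
def Pside (C : Set (At σ ℕ)) (tc : Set ℕ) (z : ℕ) : Prop :=
  ∀ w, Relation.ReflTransGen (edg C) w z → At.F w ∉ C ∧ At.A w ∉ C ∧ w ∉ tc

/-- Structural invariants of cactuses. -/
structure Inv (p x0 : ℕ) (C : Set (At σ ℕ)) (tc : Set ℕ) : Prop where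
  invF : ∀ a, At.F a ∈ C ↔ a = x0
  invT : ∀ a, At.T a ∈ C → a ∈ tc
  invA : ∀ a, At.A a ∈ C → a ∈ tc
  invx0 : x0 ∉ tc
  invIn : ∀ a ∈ tc, ∃ s b, At.R s b a ∈ C
  invPhi : ∃ φ : ℕ → ZMod p, (∀ s a b, At.R s a b ∈ C → φ b = φ a + 1) ∧
      (∀ a ∈ tc, φ a = 0) ∧ φ x0 = 0
  invTwo : ∀ z y z', edg C z z' → edg C y z' → z ≠ y → Pside C tc z ∨ Pside C tc y
  invRoot : ∀ w, edg C w x0 → Pside C tc w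

variable {m x0 p : ℕ} {ρl : ℕ → σ} {TL : Set ℕ}

lemma edg_pathCQ {a b : ℕ} (h : edg (pathCQ σ m ρl {x0} TL) a b) :
    b = a + 1 ∧ a < m := by
  obtain ⟨s, hs⟩ := h
  rw [pathCQ_R_mem] at hs
  obtain ⟨i, hi, _, rfl, rfl⟩ := hs
  exact ⟨rfl, hi⟩

lemma rtg_pathCQ {a b : ℕ}
    (h : Relation.ReflTransGen (edg (pathCQ σ m ρl {x0} TL)) a b) : a ≤ b := by
  induction h with
  | refl => exact le_refl _
  | tail _ h2 ih => have := (edg_pathCQ h2).1; omega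

lemma inv_base (hx0TL : x0 ∉ TL) (hTLm : TL ⊆ Set.Iic m) (hTLpos : ∀ t ∈ TL, x0 < t)
    (hTLmod : ∀ t ∈ TL, ∃ k, t = x0 + k * p) :
    Inv p x0 (pathCQ σ m ρl {x0} TL) {v | solT (pathCQ σ m ρl {x0} TL) v} := by
  have htc : {v | solT (pathCQ σ m ρl {x0} TL) v} = TL := by
    ext v; exact solT_pathCQ hx0TL
  rw [htc]
  constructor
  · intro a; exact pathCQ_F_mem
  · intro a ha; exact pathCQ_T_mem.1 ha
  · intro a ha; exact absurd ha pathCQ_A_mem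
  · exact hx0TL
  · intro a ha
    have h1 : x0 < a := hTLpos a ha
    have h2 : a ≤ m := hTLm ha
    refine ⟨ρl (a - 1), a - 1, ?_⟩
    rw [pathCQ_R_mem]
    exact ⟨a - 1, by omega, rfl, rfl, by omega⟩
  · refine ⟨fun i => (i : ZMod p) - (x0 : ZMod p), ?_, ?_, ?_⟩
    · intro s a b hab
      rw [pathCQ_R_mem] at hab
      obtain ⟨i, _, _, rfl, rfl⟩ := hab
      push_cast; ring
    · intro a ha
      obtain ⟨k, rfl⟩ := hTLmod a ha
      push_cast
      rw [ZMod.natCast_self]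
      ring
    · exact sub_self _
  · intro z y z' hz hy hne
    obtain ⟨h1, _⟩ := edg_pathCQ hz
    obtain ⟨h2, _⟩ := edg_pathCQ hy
    omega
  · intro w hw
    obtain ⟨h1, hm'⟩ := edg_pathCQ hw
    intro w' hw'
    have hle : w' ≤ w := rtg_pathCQ hw'
    refine ⟨?_, pathCQ_A_mem, ?_⟩
    · rw [pathCQ_F_mem]; omega
    · intro hmem
      have := hTLpos w' hmem
      omega

lemma edg_diff_T {C : Set (At σ ℕ)} {y a b : ℕ} :
    edg (C \ {At.T y}) a b ↔ edg C a b := by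
  constructor
  · rintro ⟨s, hs, _⟩; exact ⟨s, hs⟩
  · rintro ⟨s, hs⟩; exact ⟨s, hs, by simp⟩

lemma inv_prune {C : Set (At σ ℕ)} {tc : Set ℕ} {y : ℕ}
    (hInv : Inv p x0 C tc) : Inv p x0 (C \ {At.T y}) tc := by
  have hedg : edg (C \ {At.T y}) = edg C := by
    ext a b; exact edg_diff_T
  have hPside : ∀ z, Pside C tc z → Pside (C \ {At.T y}) tc z := by
    intro z hz w hw
    rw [hedg] at hw
    obtain ⟨h1, h2, h3⟩ := hz w hw
    exact ⟨fun h => h1 h.1, fun h => h2 h.1, h3⟩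
  constructor
  · intro a
    rw [← hInv.invF a]
    simp [Set.mem_diff]
  · intro a ha; exact hInv.invT a ha.1
  · intro a ha; exact hInv.invA a ha.1
  · exact hInv.invx0
  · intro a ha
    obtain ⟨s, b, hb⟩ := hInv.invIn a ha
    exact ⟨s, b, hb, by simp⟩
  · obtain ⟨φ, h1, h2, h3⟩ := hInv.invPhi
    exact ⟨φ, fun s a b hab => h1 s a b hab.1, h2, h3⟩
  · intro z y' z' hz hy hne
    rw [hedg] at hz hy
    rcases hInv.invTwo z y' z' hz hy hne with h | h
    · exact Or.inl (hPside _ h)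
    · exact Or.inr (hPside _ h)
  · intro w hw
    rw [hedg] at hw
    exact hPside _ (hInv.invRoot w hw)

end Inv
section BudInv

variable {σ : Type} {m x0 p : ℕ} {ρl : ℕ → σ} {TL : Set ℕ}
variable {C : Set (At σ ℕ)} {tc : Set ℕ} {y : ℕ} {f : ℕ → ℕ}

lemma budcopy_mem {a : At σ ℕ} :
    a ∈ At.map f '' (insert (At.A x0) (pathCQ σ m ρl {x0} TL \ {At.F x0})) ↔
      (a = At.A (f x0) ∨ (∃ t ∈ TL, a = At.T (f t)) ∨
        ∃ i, i < m ∧ a = At.R (ρl i) (f i) (f (i + 1))) := by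
  constructor
  · rintro ⟨a0, ha0, rfl⟩
    rcases Set.mem_insert_iff.1 ha0 with rfl | ⟨hq, hne⟩
    · exact Or.inl rfl
    · rcases pathCQ_cases hq with ⟨i, hi, rfl⟩ | rfl | ⟨t, ht, rfl⟩
      · exact Or.inr (Or.inr ⟨i, hi, rfl⟩)
      · exact absurd rfl hne
      · exact Or.inr (Or.inl ⟨t, ht, rfl⟩)
  · rintro (rfl | ⟨t, ht, rfl⟩ | ⟨i, hi, rfl⟩)
    · exact ⟨At.A x0, Set.mem_insert _ _, rfl⟩
    · exact ⟨At.T t, Set.mem_insert_of_mem _ ⟨pathCQ_T_mem.2 ht, by simp⟩, rfl⟩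
    · exact ⟨At.R (ρl i) i (i + 1), Set.mem_insert_of_mem _ ⟨Or.inl ⟨i, hi, rfl⟩, by simp⟩, rfl⟩

lemma inv_bud (hx0TL : x0 ∉ TL) (hTLm : TL ⊆ Set.Iic m) (hTLpos : ∀ t ∈ TL, x0 < t)
    (hTLmod : ∀ t ∈ TL, ∃ k, t = x0 + k * p)
    (hInv : Inv p x0 C tc)
    (hyT : At.T y ∈ C) (hyF : At.F y ∉ C)
    (hinj : Function.Injective f) (hfx : f x0 = y)
    (hfresh : ∀ v, v ≠ x0 → ¬ occ C (f v)) :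
    Inv p x0
      ((C \ {At.T y}) ∪ At.map f '' (insert (At.A x0) (pathCQ σ m ρl {x0} TL \ {At.F x0})))
      (tc ∪ f '' {v | solT (pathCQ σ m ρl {x0} TL) v}) := by
  set C' := (C \ {At.T y}) ∪
      At.map f '' (insert (At.A x0) (pathCQ σ m ρl {x0} TL \ {At.F x0})) with hC'def
  set tc' := tc ∪ f '' {v | solT (pathCQ σ m ρl {x0} TL) v} with htc'def
  have hytc : y ∈ tc := hInv.invT y hyT
  have hoccx0 : occ C x0 := occ_F ((hInv.invF x0).2 rfl)
  have hsolTL : ∀ t, t ∈ {v | solT (pathCQ σ m ρl {x0} TL) v} ↔ t ∈ TL := by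
    intro t; exact solT_pathCQ hx0TL
  have hmemF : ∀ a, At.F a ∈ C' ↔ a = x0 := by
    intro a; constructor
    · rintro (⟨h, _⟩ | h)
      · exact (hInv.invF a).1 h
      · rcases budcopy_mem.1 h with h | ⟨t, ht, h⟩ | ⟨i, hi, h⟩ <;> simp at h
    · intro ha
      exact Or.inl ⟨(hInv.invF a).2 ha, by simp⟩
  have hmemA : ∀ a, At.A a ∈ C' ↔ (At.A a ∈ C ∨ a = y) := by
    intro a; constructor
    · rintro (⟨h, _⟩ | h)
      · exact Or.inl h
      · rcases budcopy_mem.1 h with h | ⟨t, ht, h⟩ | ⟨i, hi, h⟩ <;> simp at h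
        exact Or.inr (h ▸ hfx ▸ rfl)
    · rintro (h | rfl)
      · exact Or.inl ⟨h, by simp⟩
      · exact Or.inr (budcopy_mem.2 (Or.inl (by rw [hfx])))
  have hmemT : ∀ a, At.T a ∈ C' ↔ ((At.T a ∈ C ∧ a ≠ y) ∨ ∃ t ∈ TL, a = f t) := by
    intro a; constructor
    · rintro (⟨h, hne⟩ | h)
      · refine Or.inl ⟨h, ?_⟩; simpa using hne
      · rcases budcopy_mem.1 h with h | ⟨t, ht, h⟩ | ⟨i, hi, h⟩ <;> simp at h
        exact Or.inr ⟨t, ht, h⟩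
    · rintro (⟨h, hne⟩ | ⟨t, ht, rfl⟩)
      · exact Or.inl ⟨h, by simp [hne]⟩
      · exact Or.inr (budcopy_mem.2 (Or.inr (Or.inl ⟨t, ht, rfl⟩)))
  have hmemR : ∀ s a b, At.R s a b ∈ C' ↔
      (At.R s a b ∈ C ∨ ∃ i, i < m ∧ s = ρl i ∧ a = f i ∧ b = f (i + 1)) := by
    intro s a b; constructor
    · rintro (⟨h, _⟩ | h)
      · exact Or.inl h
      · rcases budcopy_mem.1 h with h | ⟨t, ht, h⟩ | ⟨i, hi, h⟩ <;> simp at h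
        exact Or.inr ⟨i, hi, h.1, h.2.1, h.2.2⟩
    · rintro (h | ⟨i, hi, rfl, rfl, rfl⟩)
      · exact Or.inl ⟨h, by simp⟩
      · exact Or.inr (budcopy_mem.2 (Or.inr (Or.inr ⟨i, hi, rfl⟩)))
  have hedg' : ∀ a b, edg C' a b ↔ (edg C a b ∨ ∃ i, i < m ∧ a = f i ∧ b = f (i + 1)) := by
    intro a b; constructor
    · rintro ⟨s, hs⟩
      rcases (hmemR s a b).1 hs with h | ⟨i, hi, _, h2, h3⟩
      · exact Or.inl ⟨s, h⟩
      · exact Or.inr ⟨i, hi, h2, h3⟩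
    · rintro (⟨s, hs⟩ | ⟨i, hi, rfl, rfl⟩)
      · exact ⟨s, (hmemR s a b).2 (Or.inl hs)⟩
      · exact ⟨ρl i, (hmemR _ _ _).2 (Or.inr ⟨i, hi, rfl, rfl, rfl⟩)⟩
  -- backward reachability lemmas
  have hBRfresh : ∀ w z, Relation.ReflTransGen (edg C') w z →
      ∀ j, j < x0 → z = f j → ∃ j', j' ≤ j ∧ w = f j' := by
    intro w z h
    induction h with
    | refl => intro j _ hz; exact ⟨j, le_refl j, hz⟩
    | tail h1 h2 ih =>
      intro j hj hz
      subst hz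
      rcases (hedg' _ _).1 h2 with hOld | ⟨i, hi, hb, hfi⟩
      · exfalso
        obtain ⟨s, hs⟩ := hOld
        exact hfresh j (by omega) (occ_R_right hs)
      · have hij : j = i + 1 := hinj hfi
        obtain ⟨j', hj', hw⟩ := ih i (by omega) hb
        exact ⟨j', by omega, hw⟩
  have hBR2 : ∀ w z, Relation.ReflTransGen (edg C') w z → occ C z →
      Relation.ReflTransGen (edg C) w z ∨ ∃ j, j < x0 ∧ w = f j := by
    intro w z h hz
    induction h using Relation.ReflTransGen.head_induction_on with
    | refl => exact Or.inl Relation.ReflTransGen.refl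
    | head h' hrt ih =>
      rcases ih with hOld | ⟨j, hj, hc⟩
      · rcases (hedg' _ _).1 h' with h'' | ⟨i, hi, ha, hfi⟩
        · exact Or.inl (hOld.head h'')
        · by_cases hix : i + 1 = x0
          · exact Or.inr ⟨i, by omega, ha⟩
          · exfalso
            have hoccc : occ C (f (i + 1)) := by
              rw [← hfi]
              rcases hOld.cases_head with hrfl | ⟨d, ⟨s, hs⟩, _⟩
              · rw [hrfl]; exact hz
              · exact occ_R_left hs
            exact hfresh (i + 1) hix hoccc
      · rcases (hedg' _ _).1 h' with h'' | ⟨i, hi, ha, hfi⟩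
        · exfalso
          obtain ⟨s, hs⟩ := h''
          rw [hc] at hs
          exact hfresh j (by omega) (occ_R_right hs)
        · have hfj : f (i + 1) = f j := by rw [← hfi, hc]
          have hij : i + 1 = j := hinj hfj
          exact Or.inr ⟨i, by omega, ha⟩
  have hPsideFresh : ∀ j, j < x0 → Pside C' tc' (f j) := by
    intro j hj w hw
    obtain ⟨j', hj', rfl⟩ := hBRfresh w (f j) hw j hj rfl
    have hne : j' ≠ x0 := by omega
    refine ⟨?_, ?_, ?_⟩
    · intro hF
      rw [hmemF] at hF
      exact hfresh j' hne (hF ▸ hoccx0)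
    · intro hA
      rcases (hmemA _).1 hA with hA | hA
      · exact hfresh j' hne (occ_A hA)
      · exact hne (hinj (hA.trans hfx.symm))
    · rintro (htc | ⟨t, ht, hft⟩)
      · obtain ⟨s, b, hb⟩ := hInv.invIn _ htc
        exact hfresh j' hne (occ_R_right hb)
      · have h1 : t = j' := hinj hft
        have h2 : x0 < t := hTLpos t ((hsolTL t).1 ht)
        omega
  have hPsideLift : ∀ z, occ C z → Pside C tc z → Pside C' tc' z := by
    intro z hocc hP w hw
    rcases hBR2 w z hw hocc with hOld | ⟨j, hj, rfl⟩
    · obtain ⟨h1, h2, h3⟩ := hP w hOld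
      have hoccw : occ C w := by
        rcases hOld.cases_head with hrfl | ⟨d, ⟨s, hs⟩, _⟩
        · rw [hrfl]; exact hocc
        · exact occ_R_left hs
      refine ⟨?_, ?_, ?_⟩
      · intro hF
        rw [hmemF] at hF
        subst hF
        exact h1 ((hInv.invF w).2 rfl)
      · intro hA
        rcases (hmemA _).1 hA with hA | rfl
        · exact h2 hA
        · exact h3 hytc
      · rintro (htc | ⟨t, ht, hft⟩)
        · exact h3 htc
        · have h4 : t ∈ TL := (hsolTL t).1 ht
          have h5 : t ≠ x0 := fun h => hx0TL (h ▸ h4)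
          exact hfresh t h5 (hft ▸ hoccw)
    · exact hPsideFresh j hj (f j) Relation.ReflTransGen.refl
  constructor
  · exact hmemF
  · intro a ha
    rcases (hmemT a).1 ha with ⟨h, _⟩ | ⟨t, ht, rfl⟩
    · exact Or.inl (hInv.invT a h)
    · exact Or.inr ⟨t, (hsolTL t).2 ht, rfl⟩
  · intro a ha
    rcases (hmemA a).1 ha with h | rfl
    · exact Or.inl (hInv.invA a h)
    · exact Or.inl hytc
  · rintro (h | ⟨t, ht, hft⟩)
    · exact hInv.invx0 h
    · have h4 : t ∈ TL := (hsolTL t).1 ht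
      have h5 : t ≠ x0 := fun h => hx0TL (h ▸ h4)
      exact hfresh t h5 (hft ▸ hoccx0)
  · rintro a (ha | ⟨t, ht, rfl⟩)
    · obtain ⟨s, b, hb⟩ := hInv.invIn a ha
      exact ⟨s, b, (hmemR _ _ _).2 (Or.inl hb)⟩
    · have h4 : t ∈ TL := (hsolTL t).1 ht
      have h1 : x0 < t := hTLpos t h4
      have h2 : t ≤ m := hTLm h4
      refine ⟨ρl (t - 1), f (t - 1), (hmemR _ _ _).2 (Or.inr ⟨t - 1, by omega, rfl, rfl, ?_⟩)⟩
      congr 1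
      omega
  · obtain ⟨φ, hφE, hφtc, hφ0⟩ := hInv.invPhi
    classical
    set φ' : ℕ → ZMod p :=
      fun w => if h : ∃ i, f i = w ∧ i ≠ x0 then ((h.choose : ZMod p) - (x0 : ZMod p))
        else φ w with hφ'def
    have hval : ∀ i : ℕ, φ' (f i) = (i : ZMod p) - (x0 : ZMod p) := by
      intro i
      by_cases hi : i = x0
      · have hno : ¬ ∃ j, f j = f i ∧ j ≠ x0 := by
          rintro ⟨j, hj, hjne⟩; exact hjne ((hinj hj).trans hi)
        rw [hφ'def]
        simp only [dif_neg hno]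
        rw [hi, hfx, hφtc y hytc, sub_self]
      · have hex : ∃ j, f j = f i ∧ j ≠ x0 := ⟨i, rfl, hi⟩
        rw [hφ'def]
        simp only [dif_pos hex]
        have hspec := hex.choose_spec
        rw [hinj hspec.1]
    have hold : ∀ w, occ C w → φ' w = φ w := by
      intro w hw
      have hno : ¬ ∃ j, f j = w ∧ j ≠ x0 := by
        rintro ⟨j, rfl, hjne⟩; exact hfresh j hjne hw
      rw [hφ'def]
      simp only [dif_neg hno]
    refine ⟨φ', ?_, ?_, ?_⟩
    · intro s a b hab
      rcases (hmemR s a b).1 hab with h | ⟨i, hi, _, rfl, rfl⟩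
      · rw [hold a (occ_R_left h), hold b (occ_R_right h)]
        exact hφE s a b h
      · rw [hval, hval]
        push_cast
        ring
    · rintro a (ha | ⟨t, ht, rfl⟩)
      · obtain ⟨s, b, hb⟩ := hInv.invIn a ha
        rw [hold a (occ_R_right hb)]
        exact hφtc a ha
      · rw [hval]
        obtain ⟨k, rfl⟩ := hTLmod t ((hsolTL t).1 ht)
        push_cast
        rw [ZMod.natCast_self]
        ring
    · rw [hold x0 hoccx0]
      exact hφ0
  · intro z yy z' hz hy hne
    rcases (hedg' _ _).1 hz with hz1 | ⟨i, hi, rfl, rfl⟩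
    · rcases (hedg' _ _).1 hy with hy1 | ⟨i', hi', hyy, hz'⟩
      · rcases hInv.invTwo z yy z' hz1 hy1 hne with h | h
        · exact Or.inl (hPsideLift z (occ_R_left hz1.choose_spec) h)
        · exact Or.inr (hPsideLift yy (occ_R_left hy1.choose_spec) h)
      · -- z' old (target of old edge) and z' = f (i'+1)
        have hocc : occ C z' := occ_R_right hz1.choose_spec
        by_cases hix : i' + 1 = x0
        · exact Or.inr (hyy ▸ hPsideFresh i' (by omega) )
        · exact absurd (hz' ▸ hocc) (hfresh (i' + 1) hix)
    · rcases (hedg' _ _).1 hy with hy1 | ⟨i', hi', hyy, hz'⟩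
      · have hocc : occ C (f (i + 1)) := occ_R_right hy1.choose_spec
        by_cases hix : i + 1 = x0
        · exact Or.inl (hPsideFresh i (by omega))
        · exact absurd hocc (hfresh (i + 1) hix)
      · have : i = i' := by
          have := hinj hz'.symm
          omega
        exact absurd (by rw [this, hyy]) hne
  · intro w hw
    rcases (hedg' _ _).1 hw with h1 | ⟨i, hi, rfl, hfi⟩
    · exact hPsideLift w (occ_R_left h1.choose_spec) (hInv.invRoot w h1)
    · exfalso
      by_cases hix : i + 1 = x0
      · have hxy : x0 = y := by rw [hfi, hix, hfx]
        exact hInv.invx0 (hxy ▸ hytc)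
      · exact hfresh (i + 1) hix (hfi ▸ hoccx0)

end BudInv
section Entail

variable {σ : Type} {m x0 p : ℕ} {ρl : ℕ → σ} {TL : Set ℕ}
variable {C : Set (At σ ℕ)} {y : ℕ} {f : ℕ → ℕ}

lemma budmem_F {a : ℕ} :
    At.F a ∈ (C \ {At.T y}) ∪
      At.map f '' (insert (At.A x0) (pathCQ σ m ρl {x0} TL \ {At.F x0})) ↔ At.F a ∈ C := by
  constructor
  · rintro (⟨h, _⟩ | h)
    · exact h
    · rcases budcopy_mem.1 h with h | ⟨t, ht, h⟩ | ⟨i, hi, h⟩ <;> simp at h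
  · intro h; exact Or.inl ⟨h, by simp⟩

lemma budmem_A {a : ℕ} :
    At.A a ∈ (C \ {At.T y}) ∪
      At.map f '' (insert (At.A x0) (pathCQ σ m ρl {x0} TL \ {At.F x0})) ↔
      (At.A a ∈ C ∨ a = f x0) := by
  constructor
  · rintro (⟨h, _⟩ | h)
    · exact Or.inl h
    · rcases budcopy_mem.1 h with h | ⟨t, ht, h⟩ | ⟨i, hi, h⟩ <;> simp at h
      exact Or.inr h
  · rintro (h | rfl)
    · exact Or.inl ⟨h, by simp⟩
    · exact Or.inr (budcopy_mem.2 (Or.inl rfl))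

lemma budmem_T {a : ℕ} :
    At.T a ∈ (C \ {At.T y}) ∪
      At.map f '' (insert (At.A x0) (pathCQ σ m ρl {x0} TL \ {At.F x0})) ↔
      ((At.T a ∈ C ∧ a ≠ y) ∨ ∃ t ∈ TL, a = f t) := by
  constructor
  · rintro (⟨h, hne⟩ | h)
    · refine Or.inl ⟨h, ?_⟩; simpa using hne
    · rcases budcopy_mem.1 h with h | ⟨t, ht, h⟩ | ⟨i, hi, h⟩ <;> simp at h
      exact Or.inr ⟨t, ht, h⟩
  · rintro (⟨h, hne⟩ | ⟨t, ht, rfl⟩)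
    · exact Or.inl ⟨h, by simp [hne]⟩
    · exact Or.inr (budcopy_mem.2 (Or.inr (Or.inl ⟨t, ht, rfl⟩)))

lemma budmem_R {s : σ} {a b : ℕ} :
    At.R s a b ∈ (C \ {At.T y}) ∪
      At.map f '' (insert (At.A x0) (pathCQ σ m ρl {x0} TL \ {At.F x0})) ↔
      (At.R s a b ∈ C ∨ ∃ i, i < m ∧ s = ρl i ∧ a = f i ∧ b = f (i + 1)) := by
  constructor
  · rintro (⟨h, _⟩ | h)
    · exact Or.inl h
    · rcases budcopy_mem.1 h with h | ⟨t, ht, h⟩ | ⟨i, hi, h⟩ <;> simp at h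
      exact Or.inr ⟨i, hi, h.1, h.2.1, h.2.2⟩
  · rintro (h | ⟨i, hi, rfl, rfl, rfl⟩)
    · exact Or.inl ⟨h, by simp⟩
    · exact Or.inr (budcopy_mem.2 (Or.inr (Or.inr ⟨i, hi, rfl⟩)))

lemma inv_of_cacp (hx0TL : x0 ∉ TL) (hTLm : TL ⊆ Set.Iic m) (hTLpos : ∀ t ∈ TL, x0 < t)
    (hTLmod : ∀ t ∈ TL, ∃ k, t = x0 + k * p)
    {C : Set (At σ ℕ)} {S : Set (List ℕ)} {seg : ℕ → List ℕ} {tc : Set ℕ}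
    (hC : CacP (pathCQ σ m ρl {x0} TL) x0 C S seg tc) : Inv p x0 C tc := by
  induction hC with
  | base => exact inv_base hx0TL hTLm hTLpos hTLmod
  | bud C S seg tc hC y hyT hyF f hinj hfx hfresh ih =>
      exact inv_bud hx0TL hTLm hTLpos hTLmod ih hyT hyF hinj hfx hfresh
  | prune C S seg tc hC y hyT hyF hent ih => exact inv_prune ih

lemma entail_cacp (hx0TL : x0 ∉ TL)
    {C : Set (At σ ℕ)} {S : Set (List ℕ)} {seg : ℕ → List ℕ} {tc : Set ℕ}
    (hC : CacP (pathCQ σ m ρl {x0} TL) x0 C S seg tc) :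
    covACert C (pathCQ σ m ρl {x0} TL) := by
  induction hC with
  | base =>
    intro c
    refine ⟨fun v => v, ?_⟩
    intro a ha
    rw [At.map_id']
    rcases pathCQ_cases ha with ⟨i, hi, rfl⟩ | rfl | ⟨t, ht, rfl⟩
    · exact ha
    · exact Or.inl ha
    · exact Or.inl ha
  | bud C S seg tc hC y hyT hyF f hinj hfx hfresh ih =>
    intro c
    have hAy : At.A y ∈ (C \ {At.T y}) ∪
        At.map f '' (insert (At.A x0) (pathCQ σ m ρl {x0} TL \ {At.F x0})) :=
      budmem_A.2 (Or.inr hfx.symm)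
    have hFy : At.F y ∉ (C \ {At.T y}) ∪
        At.map f '' (insert (At.A x0) (pathCQ σ m ρl {x0} TL \ {At.F x0})) :=
      fun h => hyF (budmem_F.1 h)
    have hTy : At.T y ∉ (C \ {At.T y}) ∪
        At.map f '' (insert (At.A x0) (pathCQ σ m ρl {x0} TL \ {At.F x0})) := by
      intro h
      rcases budmem_T.1 h with ⟨_, hne⟩ | ⟨t, ht, hty⟩
      · exact hne rfl
      · have : t = x0 := hinj (hty.symm.trans hfx.symm)
        exact hx0TL (this ▸ ht)
    have hundecy : undecided ((C \ {At.T y}) ∪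
        At.map f '' (insert (At.A x0) (pathCQ σ m ρl {x0} TL \ {At.F x0}))) y :=
      ⟨hAy, hFy, hTy⟩
    by_cases hcy : c y = true
    · refine ⟨f, ?_⟩
      intro a ha
      rcases pathCQ_cases ha with ⟨i, hi, rfl⟩ | rfl | ⟨t, ht, rfl⟩
      · exact budmem_R.2 (Or.inr ⟨i, hi, rfl, rfl, rfl⟩)
      · show At.F (f x0) ∈ _ ∨ _
        rw [hfx]
        exact Or.inr ⟨hundecy, hcy⟩
      · exact Or.inl (budmem_T.2 (Or.inr ⟨t, ht, rfl⟩))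
    · have hcy' : c y = false := by simpa using hcy
      obtain ⟨h, hh⟩ := ih c
      have hFS : ∀ d, (minModel C c).FS d →
          (minModel ((C \ {At.T y}) ∪
            At.map f '' (insert (At.A x0) (pathCQ σ m ρl {x0} TL \ {At.F x0}))) c).FS d := by
        rintro d (hd | ⟨⟨hA, hF, hT⟩, hc⟩)
        · exact Or.inl (budmem_F.2 hd)
        · refine Or.inr ⟨⟨budmem_A.2 (Or.inl hA), ?_, ?_⟩, hc⟩
          · intro hF'; exact hF (budmem_F.1 hF')
          · intro hT'
            rcases budmem_T.1 hT' with ⟨hT2, _⟩ | ⟨t, ht, rfl⟩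
            · exact hT hT2
            · exact hfresh t (fun he => hx0TL (he ▸ ht)) (occ_A hA)
      have hTS : ∀ d, (minModel C c).TS d →
          (minModel ((C \ {At.T y}) ∪
            At.map f '' (insert (At.A x0) (pathCQ σ m ρl {x0} TL \ {At.F x0}))) c).TS d := by
        rintro d (hd | ⟨⟨hA, hF, hT⟩, hc⟩)
        · by_cases hdy : d = y
          · subst hdy
            exact Or.inr ⟨hundecy, hcy'⟩
          · exact Or.inl (budmem_T.2 (Or.inl ⟨hd, hdy⟩))
        · refine Or.inr ⟨⟨budmem_A.2 (Or.inl hA), ?_, ?_⟩, hc⟩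
          · intro hF'; exact hF (budmem_F.1 hF')
          · intro hT'
            rcases budmem_T.1 hT' with ⟨hT2, _⟩ | ⟨t, ht, rfl⟩
            · exact hT hT2
            · exact hfresh t (fun he => hx0TL (he ▸ ht)) (occ_A hA)
      refine ⟨h, ?_⟩
      intro a ha
      have hsat := hh a ha
      rcases pathCQ_cases ha with ⟨i, hi, rfl⟩ | rfl | ⟨t, ht, rfl⟩
      · exact budmem_R.2 (Or.inl hsat)
      · exact hFS _ hsat
      · exact hTS _ hsat
  | prune C S seg tc hC y hyT hyF hent ih => exact hent

end Entail
section ClaimA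

variable {σ : Type} {m x0 p n : ℕ} {ρl : ℕ → σ} {TL : Set ℕ}

lemma claimA (hp : 0 < p) (hTLm : TL ⊆ Set.Iic m)
    (hTLd : ∀ t, t ∈ TL ↔ ∃ k, 1 ≤ k ∧ k ≤ n ∧ t = x0 + k * p)
    {C : Set (At σ ℕ)} {tc : Set ℕ}
    (hInv : Inv p x0 C tc) (hcov : covACert C (pathCQ σ m ρl {x0} TL))
    {u v : ℕ} (hu : u ∈ tc) (hTu : At.T u ∉ C) (hAu : At.A u ∉ C)
    (hv : Relation.TransGen (edg C) u v) :
    covACert (C \ {At.T v}) (pathCQ σ m ρl {x0} TL) := by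
  classical
  intro c
  set D : Set ℕ := {w | Relation.TransGen (edg C) u w} with hD
  set c' : ℕ → Bool := fun w => if w ∈ D then false else c w with hc'
  obtain ⟨h, hh⟩ := hcov c'
  obtain ⟨φ, hφE, hφtc, hφ0⟩ := hInv.invPhi
  have hx0D : x0 ∉ D := by
    intro hx0D
    obtain ⟨yy, hyy, hyye⟩ := Relation.TransGen.tail'_iff.1 hx0D
    exact (hInv.invRoot yy hyye u hyy).2.2 hu
  have hFq : At.F x0 ∈ pathCQ σ m ρl {x0} TL := pathCQ_F_mem.2 rfl
  have hFS : (minModel C c').FS (h x0) := hh _ hFq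
  have hhx0D : h x0 ∉ D := by
    intro hmem
    rcases hFS with hF | ⟨_, hctrue⟩
    · exact hx0D ((hInv.invF _).1 hF ▸ hmem)
    · rw [hc'] at hctrue
      simp only [if_pos hmem] at hctrue
      exact Bool.false_ne_true hctrue
  have hφhx0 : φ (h x0) = 0 := by
    rcases hFS with hF | ⟨⟨hA, _, _⟩, _⟩
    · rw [(hInv.invF _).1 hF]; exact hφ0
    · exact hφtc _ (hInv.invA _ hA)
  have hwalk : ∀ i, i < m → edg C (h i) (h (i + 1)) := by
    intro i hi
    have hmem : At.R (ρl i) i (i + 1) ∈ pathCQ σ m ρl {x0} TL := Or.inl ⟨i, hi, rfl⟩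
    exact ⟨ρl i, hh _ hmem⟩
  have hRT : ∀ j, x0 ≤ j → j ≤ m → Relation.ReflTransGen (edg C) (h x0) (h j) := by
    intro j hxj hjm
    induction j, hxj using Nat.le_induction with
    | base => exact Relation.ReflTransGen.refl
    | succ j hj ih => exact (ih (by omega)).tail (hwalk j (by omega))
  have hφwalk : ∀ j, x0 ≤ j → j ≤ m → φ (h j) = φ (h x0) + ((j - x0 : ℕ) : ZMod p) := by
    intro j hxj hjm
    induction j, hxj using Nat.le_induction with
    | base => simp
    | succ j hj ih =>
      obtain ⟨s, hs⟩ := hwalk j (by omega)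
      rw [hφE s _ _ hs, ih (by omega)]
      have he : (j + 1 - x0 : ℕ) = (j - x0) + 1 := by omega
      rw [he]
      push_cast
      ring
  -- no T-slot of the homomorphism lies in D
  have hC1 : ∀ t ∈ TL, h t ∉ D := by
    intro t ht htD
    obtain ⟨kt, hkt1, hktn, htval⟩ := (hTLd t).1 ht
    have hkp : 1 * 1 ≤ kt * p := Nat.mul_le_mul hkt1 hp
    have hxt : x0 < t := by omega
    have htm : t ≤ m := hTLm ht
    set P : ℕ → Prop := fun i => x0 ≤ i ∧ h i ∉ D with hP
    set l := Nat.findGreatest P (t - 1) with hl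
    have hPl : P l := Nat.findGreatest_spec (m := x0) (by omega) ⟨le_refl x0, hhx0D⟩
    have hlle : l ≤ t - 1 := Nat.findGreatest_le _
    have hnext : h (l + 1) ∈ D := by
      by_cases hlt : l + 1 = t
      · rw [hlt]; exact htD
      · by_contra hnD
        have hPl1 : P (l + 1) := ⟨by omega, hnD⟩
        exact absurd hPl1
          (Nat.findGreatest_is_greatest (P := P) (k := l + 1) (n := t - 1) (by omega) (by omega))
    obtain ⟨yy, hyy, hyye⟩ := Relation.TransGen.tail'_iff.1 hnext
    have hedge : edg C (h l) (h (l + 1)) := hwalk l (by omega)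
    have hlu : h l = u := by
      by_cases hzy : yy = h l
      · subst hzy
        rcases hyy.cases_head with heq | ⟨d, hd, hdr⟩
        · exact heq.symm
        · exact absurd (Relation.TransGen.head' hd hdr) hPl.2
      · rcases hInv.invTwo (h l) yy (h (l + 1)) hedge hyye (fun he => hzy he.symm)
          with hPs | hPs
        · exfalso
          obtain ⟨hF1, hA1, _⟩ := hPs (h x0) (hRT l (by omega) (by omega))
          rcases hFS with hF | ⟨⟨hA, _, _⟩, _⟩
          · exact hF1 hF
          · exact hA1 hA
        · exact absurd hu (hPs u hyy).2.2
    have hlgt : x0 < l := by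
      rcases Nat.lt_or_ge x0 l with h' | h'
      · exact h'
      · exfalso
        have hlx : l = x0 := by omega
        have hux : u = h x0 := by rw [← hlu, hlx]
        rcases hFS with hF | ⟨⟨hA, _, _⟩, _⟩
        · have hux0 : u = x0 := by rw [hux, (hInv.invF _).1 hF]
          exact hInv.invx0 (hux0 ▸ hu)
        · exact hAu (hux ▸ hA)
    haveI : NeZero p := ⟨Nat.pos_iff_ne_zero.1 hp⟩
    have hzero : ((l - x0 : ℕ) : ZMod p) = 0 := by
      have hφl := hφwalk l (by omega) (by omega)
      rw [hlu, hφtc u hu, hφhx0, zero_add] at hφl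
      exact hφl.symm
    obtain ⟨k0, hk0⟩ := (ZMod.natCast_eq_zero_iff _ _).1 hzero
    rw [Nat.mul_comm] at hk0
    have hk01 : 1 ≤ k0 := by
      rcases Nat.eq_zero_or_pos k0 with h' | h'
      · rw [h', Nat.zero_mul] at hk0; omega
      · exact h'
    have hkk : k0 < kt := by
      by_contra hge
      push_neg at hge
      have : kt * p ≤ k0 * p := Nat.mul_le_mul_right p hge
      omega
    have hlTL : l ∈ TL := (hTLd l).2 ⟨k0, hk01, by omega, by omega⟩
    have hTq : At.T l ∈ pathCQ σ m ρl {x0} TL := pathCQ_T_mem.2 hlTL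
    have hTSl : (minModel C c').TS (h l) := hh _ hTq
    rcases hTSl with hT | ⟨⟨hA, _, _⟩, _⟩
    · exact hTu (hlu ▸ hT)
    · exact hAu (hlu ▸ hA)
  -- transfer the homomorphism
  refine ⟨h, ?_⟩
  intro a ha
  rcases pathCQ_cases ha with ⟨i, hi, rfl⟩ | rfl | ⟨t, ht, rfl⟩
  · exact ⟨hh _ ha, by simp⟩
  · rcases hFS with hF | ⟨⟨hA, hF2, hT2⟩, hctrue⟩
    · exact Or.inl ⟨hF, by simp⟩
    · refine Or.inr ⟨⟨⟨hA, by simp⟩, ?_, ?_⟩, ?_⟩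
      · intro h'; exact hF2 h'.1
      · intro h'; exact hT2 h'.1
      · rw [hc'] at hctrue
        simp only [if_neg hhx0D] at hctrue
        exact hctrue
  · have hts : (minModel C c').TS (h t) := hh _ ha
    have hhtD : h t ∉ D := hC1 t ht
    rcases hts with hT | ⟨⟨hA, hF2, hT2⟩, hcfalse⟩
    · have hne : h t ≠ v := fun he => hhtD (he ▸ hv)
      exact Or.inl ⟨hT, by simp [hne]⟩
    · refine Or.inr ⟨⟨⟨hA, by simp⟩, ?_, ?_⟩, ?_⟩
      · intro h'; exact hF2 h'.1
      · intro h'; exact hT2 h'.1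
      · rw [hc'] at hcfalse
        simp only [if_neg hhtD] at hcfalse
        exact hcfalse

end ClaimA
/-- Let `q = q_{0r}` be a right-periodic twinless path `1`-CQ
with `r ≥ 2` and `Q = (cov_A, q)`, and let `C ∈ K_Q^min` with set of `T`-copies
`tc`.  If a `T`-copy `u` is unlabelled in `C` (neither `T` nor `A`), then there
is no `T`-copy `v` labelled by `T` reachable from `u` by a directed path in `C`. -/
theorem statement_11 {σ : Type} (m x0 : ℕ) (ρ : ℕ → σ) (TL : Set ℕ)
    (hm : 0 < m) (hx0 : x0 ≤ m) (hTL : TL ⊆ Set.Iic m)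
    (hr2 : 2 ≤ TL.ncard) (hx0TL : x0 ∉ TL)
    (hper : rightPeriodic σ m x0 ρ TL)
    (C : Set (At σ ℕ)) (S : Set (List ℕ)) (seg : ℕ → List ℕ) (tc : Set ℕ)
    (hC : CacP (pathCQ σ m ρ {x0} TL) x0 C S seg tc)
    (hmin : ∀ (C' : Set (At σ ℕ)) S' seg' tc',
      CacP (pathCQ σ m ρ {x0} TL) x0 C' S' seg' tc' →
      ∀ g : ℕ → ℕ, Function.Injective g → At.map g '' C' ⊆ C → At.map g '' C' = C) :
    ∀ u ∈ tc, At.T u ∉ C → At.A u ∉ C →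
      ∀ v ∈ tc, Relation.TransGen (fun a b => ∃ r, At.R r a b ∈ C) u v →
        At.T v ∉ C := by
  intro u hu hTu hAu v hvtc hpath hTv
  obtain ⟨hpos, hcase⟩ := hper
  rcases hcase with h1 | ⟨p, hp, hTLeq, hperiod⟩
  · omega
  generalize hn : TL.ncard = n at hTLeq
  have hTLd : ∀ t, t ∈ TL ↔ ∃ k, 1 ≤ k ∧ k ≤ n ∧ t = x0 + k * p := by
    intro t
    conv_lhs => rw [hTLeq]
    exact Iff.rfl
  have hTLmod : ∀ t ∈ TL, ∃ k, t = x0 + k * p := by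
    intro t ht
    obtain ⟨k, _, _, hk⟩ := (hTLd t).1 ht
    exact ⟨k, hk⟩
  have hInv : Inv p x0 C tc := inv_of_cacp hx0TL hTL hpos hTLmod hC
  have hcov : covACert C (pathCQ σ m ρ {x0} TL) := entail_cacp hx0TL hC
  have hent : covACert (C \ {At.T v}) (pathCQ σ m ρ {x0} TL) :=
    claimA hp hTL hTLd hInv hcov hu hTu hAu hpath
  have hFv : At.F v ∉ C := by
    intro hF
    exact hInv.invx0 (((hInv.invF v).1 hF) ▸ hvtc)
  have hC' : CacP (pathCQ σ m ρ {x0} TL) x0 (C \ {At.T v}) S seg tc :=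
    CacP.prune C S seg tc hC v hTv hFv hent
  have himg : At.map (fun w : ℕ => w) '' (C \ {At.T v}) = C \ {At.T v} := by
    have hmapid : At.map (fun w : ℕ => w) = (id : At σ ℕ → At σ ℕ) := funext At.map_id'
    rw [hmapid, Set.image_id]
  have heq := hmin _ S seg tc hC' (fun w => w) (fun a b hab => hab)
    (by rw [himg]; exact Set.diff_subset)
  rw [himg] at heq
  have : At.T v ∈ C \ {At.T v} := heq.symm ▸ hTv
  exact this.2 rfl

end DS
end

section
/- Let ψ(x⃗, y⃗) be a 3CNF in which every clause contains each variable at most once, and let q_ψ and A_ψ be the CQ and ABox constructed from ψ as described in the context. For an assignment a : x⃗ → {F, T}, let A^a_ψ = A_ψ ∪ {T(a*_x) | a(x) = T, x ∈ x⃗} ∪ {F(a*_x) | a(x) = F, x ∈ x⃗}. Then there exists an assignment b : y⃗ → {F, T} making ψ(a(x⃗), b(y⃗)) true if and only if there is a homomorphism from q_ψ into A^a_ψ viewed as an interpretation. -/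
attribute [local instance] Classical.propDecidable

namespace DS

/-- A literal: a sign and a variable (universal `Fin xn` or existential `Fin yn`). -/
abbrev Lit (xn yn : ℕ) : Type := Bool × (Fin xn ⊕ Fin yn)

/-- The variables of the CQ `q_ψ`: the clause variables `z^c`, the existential
variables `y`, and the fresh variables `x^c` (one per universal variable and
clause). -/
abbrev Vq (xn yn K : ℕ) : Type := Fin K ⊕ (Fin yn ⊕ (Fin xn × Fin K))

/-- The binary predicates `R_i^c` (one per clause and position). -/
abbrev Sg (K : ℕ) : Type := Fin K × Fin 3

/-- The individuals of the ABox `A_ψ`: `a*_x = (x, true)`, `a°_x = (x, false)`,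
`b^T_y = (y, true)`, `b^F_y = (y, false)`, and the centres `d^c_{(e₁,e₂,e₃)}`
(the triple being coded by a choice vector `Fin 3 → Bool`). -/
abbrev Ind (xn yn K : ℕ) : Type :=
  (Fin xn × Bool) ⊕ ((Fin yn × Bool) ⊕ (Fin K × (Fin 3 → Bool)))

/-- The variable `u_i^c` of `q_ψ` for position `z` of clause `c`. -/
def uVar {xn yn K : ℕ} (ψ : Fin K → Fin 3 → Lit xn yn) (c : Fin K) (z : Fin 3) :
    Vq xn yn K :=
  match (ψ c z).2 with
  | Sum.inl x => Sum.inr (Sum.inr (x, c))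
  | Sum.inr y => Sum.inr (Sum.inl y)

/-- The CQ `q_ψ`: for each clause `c = ℓ₁ ∨ ℓ₂ ∨ ℓ₃`, the atoms
`R_i^c(z^c, u_i^c)`, together with `T(x^c)` whenever `ℓ_i = x` and `F(x^c)`
whenever `ℓ_i = ¬x` for a universal variable `x`. -/
def qPsi {xn yn K : ℕ} (ψ : Fin K → Fin 3 → Lit xn yn) :
    Set (At (Sg K) (Vq xn yn K)) :=
  {a | ∃ c z, a = At.R (c, z) (Sum.inl c) (uVar ψ c z)} ∪
  {a | ∃ c z x, (ψ c z).2 = Sum.inl x ∧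
        (((ψ c z).1 = true ∧ a = At.T (Sum.inr (Sum.inr (x, c)))) ∨
         ((ψ c z).1 = false ∧ a = At.F (Sum.inr (Sum.inr (x, c)))))}

/-- Membership of a coded triple in `E^c`: condition (iii) of the construction
(some position is `a*_x`, or is `b^ν_y` with `y = ν` making the literal true). -/
def selOK {xn yn K : ℕ} (ψ : Fin K → Fin 3 → Lit xn yn) (c : Fin K)
    (v : Fin 3 → Bool) : Prop :=
  ∃ z : Fin 3, (∃ x, (ψ c z).2 = Sum.inl x ∧ v z = true) ∨
               (∃ y, (ψ c z).2 = Sum.inr y ∧ v z = (ψ c z).1)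

/-- The individual `e_z` of the coded triple `v` at position `z` of clause `c`. -/
def eInd {xn yn K : ℕ} (ψ : Fin K → Fin 3 → Lit xn yn) (c : Fin K) (z : Fin 3)
    (v : Fin 3 → Bool) : Ind xn yn K :=
  match (ψ c z).2 with
  | Sum.inl x => Sum.inl (x, v z)
  | Sum.inr y => Sum.inr (Sum.inl (y, v z))

/-- The ABox `A_ψ`: atoms `A(a*_x)`, `F(a°_x)`, `T(a°_x)` and, for each clause
`c` and each triple `(e₁,e₂,e₃) ∈ E^c`, a fresh centre `d` with atoms
`R_i^c(d, e_i)`. -/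
def APsi {xn yn K : ℕ} (ψ : Fin K → Fin 3 → Lit xn yn) :
    Set (At (Sg K) (Ind xn yn K)) :=
  {a | ∃ x : Fin xn, a = At.A (Sum.inl (x, true))} ∪
  {a | ∃ x : Fin xn, a = At.F (Sum.inl (x, false)) ∨ a = At.T (Sum.inl (x, false))} ∪
  {a | ∃ c v z, selOK ψ c v ∧
        a = At.R (c, z) (Sum.inr (Sum.inr (c, v))) (eInd ψ c z v)}

/-- `A^a_ψ = A_ψ ∪ {T(a*_x) | a(x) = T} ∪ {F(a*_x) | a(x) = F}`. -/
def APsiA {xn yn K : ℕ} (ψ : Fin K → Fin 3 → Lit xn yn) (asg : Fin xn → Bool) :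
    Set (At (Sg K) (Ind xn yn K)) :=
  APsi ψ ∪
  {a | ∃ x : Fin xn, (asg x = true ∧ a = At.T (Sum.inl (x, true))) ∨
        (asg x = false ∧ a = At.F (Sum.inl (x, true)))}


section Aux

variable {xn yn K : ℕ}

lemma uVar_inl (ψ : Fin K → Fin 3 → Lit xn yn) {c : Fin K} {z : Fin 3} {x : Fin xn}
    (hx : (ψ c z).2 = Sum.inl x) : uVar ψ c z = Sum.inr (Sum.inr (x, c)) := by
  unfold uVar; rw [hx]

lemma uVar_inr (ψ : Fin K → Fin 3 → Lit xn yn) {c : Fin K} {z : Fin 3} {y : Fin yn}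
    (hy : (ψ c z).2 = Sum.inr y) : uVar ψ c z = Sum.inr (Sum.inl y) := by
  unfold uVar; rw [hy]

lemma eInd_inl (ψ : Fin K → Fin 3 → Lit xn yn) {c : Fin K} {z : Fin 3} {x : Fin xn}
    (hx : (ψ c z).2 = Sum.inl x) (v : Fin 3 → Bool) :
    eInd ψ c z v = Sum.inl (x, v z) := by
  unfold eInd; rw [hx]

lemma eInd_inr (ψ : Fin K → Fin 3 → Lit xn yn) {c : Fin K} {z : Fin 3} {y : Fin yn}
    (hy : (ψ c z).2 = Sum.inr y) (v : Fin 3 → Bool) :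
    eInd ψ c z v = Sum.inr (Sum.inl (y, v z)) := by
  unfold eInd; rw [hy]

/-- The choice vector used in the forward direction. -/
def fwdV (ψ : Fin K → Fin 3 → Lit xn yn) (asg : Fin xn → Bool) (b : Fin yn → Bool)
    (c : Fin K) (z : Fin 3) : Bool :=
  Sum.elim (fun x => decide (asg x = (ψ c z).1)) b (ψ c z).2

/-- The homomorphism used in the forward direction. -/
def fwdH (ψ : Fin K → Fin 3 → Lit xn yn) (asg : Fin xn → Bool) (b : Fin yn → Bool) :
    Vq xn yn K → Ind xn yn K :=
  Sum.elim (fun c => Sum.inr (Sum.inr (c, fwdV ψ asg b c)))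
    (Sum.elim (fun y => Sum.inr (Sum.inl (y, b y)))
      (fun p => Sum.inl (p.1,
        decide (∃ z, (ψ p.2 z).2 = Sum.inl p.1 ∧ asg p.1 = (ψ p.2 z).1))))

end Aux

/-- Let `ψ` be a 3CNF in which every clause contains each
variable at most once and let `q_ψ`, `A_ψ` be the CQ and ABox constructed from
`ψ`.  For an assignment `a` to the universal variables, there exists an
assignment `b` to the existential variables making `ψ(a(x⃗), b(y⃗))` true if and
only if there is a homomorphism from `q_ψ` into `A^a_ψ` viewed as an
interpretation. -/
theorem statement_14 {xn yn K : ℕ} (ψ : Fin K → Fin 3 → Lit xn yn)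
    (hdist : ∀ (c : Fin K) (z z' : Fin 3), z ≠ z' → (ψ c z).2 ≠ (ψ c z').2)
    (asg : Fin xn → Bool) :
    (∃ b : Fin yn → Bool, ∀ c : Fin K, ∃ z : Fin 3,
        Sum.elim asg b (ψ c z).2 = (ψ c z).1) ↔
      (toInterp (APsiA ψ asg)).satCQ (qPsi ψ) := by
  classical
  constructor
  · rintro ⟨b, hb⟩
    have keyA : ∀ (c : Fin K) (z : Fin 3) (x : Fin xn), (ψ c z).2 = Sum.inl x →
        ((∃ z', (ψ c z').2 = Sum.inl x ∧ asg x = (ψ c z').1) ↔ asg x = (ψ c z).1) := by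
      intro c z x hx
      constructor
      · rintro ⟨z', hz', hs⟩
        have hzz : z' = z := by
          by_contra hne
          exact hdist c z' z hne (hz'.trans hx.symm)
        subst hzz; exact hs
      · intro hs; exact ⟨z, hx, hs⟩
    have hVz : ∀ (c : Fin K) (z : Fin 3) (x : Fin xn), (ψ c z).2 = Sum.inl x →
        fwdV ψ asg b c z = decide (asg x = (ψ c z).1) := by
      intro c z x hx; unfold fwdV; rw [hx]; simp
    have hVzr : ∀ (c : Fin K) (z : Fin 3) (y : Fin yn), (ψ c z).2 = Sum.inr y →
        fwdV ψ asg b c z = b y := by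
      intro c z y hy; unfold fwdV; rw [hy]; simp
    have hsel : ∀ c : Fin K, selOK ψ c (fwdV ψ asg b c) := by
      intro c
      obtain ⟨z, hz⟩ := hb c
      refine ⟨z, ?_⟩
      cases hx : (ψ c z).2 with
      | inl x =>
        rw [hx] at hz; simp at hz
        exact Or.inl ⟨x, rfl, by rw [hVz c z x hx, hz]; simp⟩
      | inr y =>
        rw [hx] at hz; simp at hz
        exact Or.inr ⟨y, rfl, by rw [hVzr c z y hx, hz]⟩
    have huv : ∀ (c : Fin K) (z : Fin 3),
        fwdH ψ asg b (uVar ψ c z) = eInd ψ c z (fwdV ψ asg b c) := by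
      intro c z
      cases hx : (ψ c z).2 with
      | inl x =>
        rw [uVar_inl ψ hx, eInd_inl ψ hx]
        unfold fwdH
        simp only [Sum.elim_inr, Sum.inl.injEq, Prod.mk.injEq, true_and]
        rw [hVz c z x hx]
        simp [keyA c z x hx]
      | inr y =>
        rw [uVar_inr ψ hx, eInd_inr ψ hx]
        unfold fwdH
        simp only [Sum.elim_inr, Sum.elim_inl]
        rw [hVzr c z y hx]
    refine ⟨fwdH ψ asg b, ?_⟩
    intro a ha
    rcases ha with ha | ha
    · obtain ⟨c, z, rfl⟩ := ha
      show At.R (c, z) (fwdH ψ asg b (Sum.inl c)) (fwdH ψ asg b (uVar ψ c z)) ∈ APsiA ψ asg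
      refine Or.inl (Or.inr ⟨c, fwdV ψ asg b c, z, hsel c, ?_⟩)
      rw [huv c z]
      rfl
    · obtain ⟨c, z, x, hx, hcase⟩ := ha
      have hd : fwdH ψ asg b (Sum.inr (Sum.inr (x, c)))
          = Sum.inl (x, decide (asg x = (ψ c z).1)) := by
        unfold fwdH
        simp [keyA c z x hx]
      rcases hcase with ⟨hs, rfl⟩ | ⟨hs, rfl⟩
      · show At.T (fwdH ψ asg b (Sum.inr (Sum.inr (x, c)))) ∈ APsiA ψ asg
        rw [hd, hs]
        cases hasg : asg x with
        | true => exact Or.inr ⟨x, Or.inl ⟨hasg, by simp [hasg]⟩⟩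
        | false => exact Or.inl (Or.inl (Or.inr ⟨x, Or.inr (by simp [hasg])⟩))
      · show At.F (fwdH ψ asg b (Sum.inr (Sum.inr (x, c)))) ∈ APsiA ψ asg
        rw [hd, hs]
        cases hasg : asg x with
        | true => exact Or.inl (Or.inl (Or.inr ⟨x, Or.inl (by simp [hasg])⟩))
        | false => exact Or.inr ⟨x, Or.inr ⟨hasg, by simp [hasg]⟩⟩
  · rintro ⟨h, hhom⟩
    refine ⟨fun y => Sum.elim (fun _ => false) (Sum.elim Prod.snd (fun _ => false))
      (h (Sum.inr (Sum.inl y))), ?_⟩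
    intro c
    have hR : ∀ z : Fin 3, ∃ w : Fin 3 → Bool, selOK ψ c w ∧
        h (Sum.inl c) = Sum.inr (Sum.inr (c, w)) ∧
        h (uVar ψ c z) = eInd ψ c z w := by
      intro z
      have ha : At.R (c, z) (Sum.inl c) (uVar ψ c z) ∈ qPsi ψ :=
        Or.inl ⟨c, z, rfl⟩
      have hs := hhom _ ha
      have hs' : At.R (c, z) (h (Sum.inl c)) (h (uVar ψ c z)) ∈ APsiA ψ asg := hs
      rcases hs' with ((h1 | h2) | h3) | h4
      · obtain ⟨x, hx⟩ := h1; exact absurd hx (by simp)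
      · obtain ⟨x, hx | hx⟩ := h2 <;> exact absurd hx (by simp)
      · obtain ⟨c', w, z', hsel', heq⟩ := h3
        rw [At.R.injEq] at heq
        obtain ⟨hcz, h1, h2⟩ := heq
        obtain ⟨hc, hz⟩ := Prod.mk.injEq .. ▸ hcz
        subst hc; subst hz
        exact ⟨w, hsel', h1, h2⟩
      · obtain ⟨x, ⟨_, hx⟩ | ⟨_, hx⟩⟩ := h4 <;> exact absurd hx (by simp)
    obtain ⟨w, hsel, hc0, _⟩ := hR 0
    obtain ⟨z₀, hz₀⟩ := hsel
    obtain ⟨w', _, hc1, hu1⟩ := hR z₀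
    have hww : w' = w := by
      rw [hc0] at hc1
      simpa using hc1.symm
    subst hww
    refine ⟨z₀, ?_⟩
    rcases hz₀ with ⟨x, hx, hvz⟩ | ⟨y, hy, hvz⟩
    · rw [hx]; simp only [Sum.elim_inl]
      rw [uVar_inl ψ hx, eInd_inl ψ hx, hvz] at hu1
      cases hsgn : (ψ c z₀).1 with
      | true =>
        have hq : At.T (Sum.inr (Sum.inr (x, c))) ∈ qPsi ψ :=
          Or.inr ⟨c, z₀, x, hx, Or.inl ⟨hsgn, rfl⟩⟩
        have ht := hhom _ hq
        have ht' : At.T (h (Sum.inr (Sum.inr (x, c)))) ∈ APsiA ψ asg := ht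
        rw [hu1] at ht'
        rcases ht' with ((h1 | h2) | h3) | h4
        · obtain ⟨x', hx'⟩ := h1; exact absurd hx' (by simp)
        · obtain ⟨x', hx' | hx'⟩ := h2 <;> exact absurd hx' (by simp)
        · obtain ⟨c', v', z', _, hx'⟩ := h3; exact absurd hx' (by simp)
        · obtain ⟨x', ⟨ha', hx'⟩ | ⟨ha', hx'⟩⟩ := h4
          · simp only [At.T.injEq, Sum.inl.injEq, Prod.mk.injEq] at hx'
            rw [← hx'.1] at ha'; exact ha'
          · exact absurd hx' (by simp)
      | false =>
        have hq : At.F (Sum.inr (Sum.inr (x, c))) ∈ qPsi ψ :=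
          Or.inr ⟨c, z₀, x, hx, Or.inr ⟨hsgn, rfl⟩⟩
        have ht := hhom _ hq
        have ht' : At.F (h (Sum.inr (Sum.inr (x, c)))) ∈ APsiA ψ asg := ht
        rw [hu1] at ht'
        rcases ht' with ((h1 | h2) | h3) | h4
        · obtain ⟨x', hx'⟩ := h1; exact absurd hx' (by simp)
        · obtain ⟨x', hx' | hx'⟩ := h2 <;> exact absurd hx' (by simp)
        · obtain ⟨c', v', z', _, hx'⟩ := h3; exact absurd hx' (by simp)
        · obtain ⟨x', ⟨ha', hx'⟩ | ⟨ha', hx'⟩⟩ := h4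
          · exact absurd hx' (by simp)
          · simp only [At.F.injEq, Sum.inl.injEq, Prod.mk.injEq] at hx'
            rw [← hx'.1] at ha'; exact ha'
    · rw [hy]; simp only [Sum.elim_inr]
      rw [uVar_inr ψ hy, eInd_inr ψ hy] at hu1
      rw [hu1]
      simpa using hvz


end DS
end

section
/- Let q be a twinless path 2-CQ in which the first T-node t_1 precedes the first F-node f_1, and let W be an n-cogwheel for q with n ≥ |q| satisfying cogwheel conditions (i) and (ii). Then for every minimal model I of cov_A and W: I does not satisfy q if and only if either all contacts of W belong to the interpretation of T in I, or all contacts of W belong to the interpretation of F in I. -/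
attribute [local instance] Classical.propDecidable

namespace DS

/-- Gluing normalisation for the nodes of an `n`-cogwheel: the chosen `T`-node
of copy `j` is glued to (identified with) the chosen `F`-node of copy `j - 1`. -/
def wheelNorm (n : ℕ) (cT cF : ZMod n → ℕ) (p : ZMod n × ℕ) : ZMod n × ℕ :=
  if p.2 = cT p.1 then (p.1 - 1, cF (p.1 - 1)) else p

/-- The copy of `q` used in a cogwheel: the labels `T`/`F` of the two chosen
contact nodes are replaced by `A`. -/
def contactCopy {σ : Type} (q : Set (At σ ℕ)) (tpos fpos : ℕ) : Set (At σ ℕ) :=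
  insert (At.A tpos) (insert (At.A fpos) (q \ {At.T tpos, At.F fpos}))

/-- The `n`-cogwheel for the path CQ `q` with contact choices `cT j ∈ TL`,
`cF j ∈ FL` (in the `j`-th copy of `q`): the `n` copies are arranged in a cycle,
gluing the `F`-contact of copy `j` to the `T`-contact of copy `j + 1`. -/
def cogwheel (σ : Type) (n : ℕ) (q : Set (At σ ℕ)) (cT cF : ZMod n → ℕ) :
    Set (At σ (ZMod n × ℕ)) :=
  {a | ∃ j : ZMod n, ∃ b ∈ contactCopy q (cT j) (cF j),
        a = At.map (fun v => wheelNorm n cT cF (j, v)) b}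

/-- The contact-distance between the contacts with indices `a` and `b`. -/
def cdist {n : ℕ} (a b : ZMod n) : ℕ := min (ZMod.val (a - b)) (ZMod.val (b - a))

-- ======================= new material =======================

/-- Generic sliding lemma. -/
lemma slide {g : ℕ → ℕ} {M : Set ℕ} {m : ℕ}
    (h1 : ∀ x, x ∉ M → g (x + 1) = g x + 1)
    (h2 : ∀ x, x ≤ m → g x ≤ m)
    (h3 : ∀ x, m < x → g x < x) :
    ∃ u ∈ M, ∃ p, 0 < p ∧ g^[p] u = u := by
  -- iterates of 0 stay in [0, m]
  have hit0 : ∀ k, g^[k] 0 ≤ m := by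
    intro k; induction k with
    | zero => simp
    | succ k ih => rw [Function.iterate_succ_apply']; exact h2 _ ih
  -- pigeonhole: find a periodic point x₀ with period p > 0
  obtain ⟨k, hk, l, hl, hkl, heq⟩ :
      ∃ k ∈ Finset.range (m + 2), ∃ l ∈ Finset.range (m + 2), k ≠ l ∧ g^[k] 0 = g^[l] 0 := by
    obtain ⟨k, hk, l, hl, hkl, heq⟩ := Finset.exists_ne_map_eq_of_card_lt_of_maps_to
      (s := Finset.range (m + 2)) (t := Finset.range (m + 1))
      (by simp) (f := fun k => g^[k] 0) (fun k _ => by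
        simp only [Finset.mem_coe, Finset.mem_range, Nat.lt_succ_iff]; exact hit0 k)
    exact ⟨k, hk, l, hl, hkl, heq⟩
  have key : ∀ k l : ℕ, k < l → g^[k] 0 = g^[l] 0 →
      ∃ u ∈ M, ∃ p, 0 < p ∧ g^[p] u = u := by
    clear hk hl hkl heq k l
    intro k l hkl heq
    set x₀ := g^[k] 0 with hx₀
    set p := l - k with hp
    have hp0 : 0 < p := by omega
    have hper : g^[p] x₀ = x₀ := by
      have h' : g^[l] 0 = g^[p] (g^[k] 0) := by
        rw [← Function.iterate_add_apply]; congr 1; omega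
      rw [hx₀]; rw [← h', ← heq]
    by_contra hcon
    push_neg at hcon
    -- no mark is periodic; slide cycles upward
    have slideup : ∀ j : ℕ, g^[p] (x₀ + j) = x₀ + j ∧
        (∀ i : ℕ, g^[i] (x₀ + j) = g^[i] x₀ + j) := by
      intro j; induction j with
      | zero => exact ⟨hper, fun i => by simp⟩
      | succ j ih =>
        obtain ⟨ihper, ihorb⟩ := ih
        -- orbit of x₀ + j avoids M
        have havoid : ∀ i, g^[i] (x₀ + j) ∉ M := by
          intro i hmem
          refine hcon _ hmem p hp0 ?_
          calc g^[p] (g^[i] (x₀ + j)) = g^[i] (g^[p] (x₀ + j)) := by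
                rw [← Function.iterate_add_apply, ← Function.iterate_add_apply, Nat.add_comm]
            _ = g^[i] (x₀ + j) := by rw [ihper]
        have horb : ∀ i : ℕ, g^[i] (x₀ + (j + 1)) = g^[i] (x₀ + j) + 1 := by
          intro i; induction i with
          | zero => simp; omega
          | succ i ih2 =>
            rw [Function.iterate_succ_apply', Function.iterate_succ_apply', ih2]
            exact h1 _ (havoid i)
        refine ⟨by rw [horb p, ihper]; omega, fun i => by rw [horb i, ihorb i]; omega⟩
    -- contradiction: a periodic point above m
    obtain ⟨hper1, -⟩ := slideup (m + 1)
    have hgt : m < x₀ + (m + 1) := by omega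
    -- above m, iterates either drop into [0,m] or strictly decrease
    have drop : ∀ i z, m < z → g^[i] z ≤ m ∨ g^[i] z + i ≤ z := by
      intro i; induction i with
      | zero => intro z _; right; simp
      | succ i ih =>
        intro z hz
        rcases ih z hz with h | h
        · left; rw [Function.iterate_succ_apply']; exact h2 _ h
        · rcases le_or_gt (g^[i] z) m with h' | h'
          · left; rw [Function.iterate_succ_apply']; exact h2 _ h'
          · right; rw [Function.iterate_succ_apply']
            have := h3 _ h'; omega
    rcases drop p (x₀ + (m + 1)) hgt with h | h
    · omega
    · rw [hper1] at h; omega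
  rcases Nat.lt_or_ge k l with hlt | hge
  · exact key k l hlt heq
  · have : l < k := by omega
    exact key l k this heq.symm


section Wheel

variable {σ : Type} {m n : ℕ} {ρ : ℕ → σ} {FL TL : Set ℕ} {cT cF : ZMod n → ℕ}

/-- normalization of a copy-node -/
def nrm (n : ℕ) (cT cF : ZMod n → ℕ) (j : ZMod n) (p : ℕ) : ZMod n × ℕ :=
  wheelNorm n cT cF (j, p)

lemma FL_ne_cT (hdisj : ∀ i, ¬ (i ∈ FL ∧ i ∈ TL)) (hcT : ∀ j, cT j ∈ TL)
    {a : ℕ} (ha : a ∈ FL) (j : ZMod n) : a ≠ cT j := by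
  intro h; exact hdisj a ⟨ha, h ▸ hcT j⟩

lemma nrm_eval {j : ZMod n} {p : ℕ} (h : p ≠ cT j) : nrm n cT cF j p = (j, p) := by
  simp [nrm, wheelNorm, h]

lemma nrm_eval_cT (j : ZMod n) : nrm n cT cF j (cT j) = (j - 1, cF (j - 1)) := by
  simp [nrm, wheelNorm]

lemma nrm_cases {j j' : ZMod n} {a a' : ℕ} (h : nrm n cT cF j a = nrm n cT cF j' a') :
    (j = j' ∧ a = a') ∨
    (a = cT j ∧ a' ≠ cT j' ∧ j' = j - 1 ∧ a' = cF (j - 1)) ∨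
    (a ≠ cT j ∧ a' = cT j' ∧ j = j' - 1 ∧ a = cF (j' - 1)) := by
  by_cases h1 : a = cT j <;> by_cases h2 : a' = cT j'
  · rw [h1, h2, nrm_eval_cT, nrm_eval_cT] at h
    obtain ⟨hj, -⟩ := Prod.mk.injEq .. ▸ h
    have hj' : j = j' := by
      have := sub_left_inj.mp hj; exact this
    left; exact ⟨hj', by rw [h1, h2, hj']⟩
  · rw [h1, nrm_eval_cT, nrm_eval (cT := cT) (cF := cF) h2] at h
    obtain ⟨hj, ha⟩ := Prod.mk.injEq .. ▸ h
    right; left; exact ⟨h1, h2, hj.symm, ha.symm⟩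
  · rw [h2, nrm_eval (cT := cT) (cF := cF) h1, nrm_eval_cT] at h
    obtain ⟨hj, ha⟩ := Prod.mk.injEq .. ▸ h
    right; right; exact ⟨h1, h2, hj, ha⟩
  · rw [nrm_eval (cT := cT) (cF := cF) h1, nrm_eval (cT := cT) (cF := cF) h2] at h
    obtain ⟨hj, ha⟩ := Prod.mk.injEq .. ▸ h
    left; exact ⟨hj, ha⟩

lemma mem_contactCopy {q : Set (At σ ℕ)} {tp fp : ℕ} {b : At σ ℕ} :
    b ∈ contactCopy q tp fp ↔
      b = At.A tp ∨ b = At.A fp ∨ (b ∈ q ∧ b ≠ At.T tp ∧ b ≠ At.F fp) := by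
  simp only [contactCopy, Set.mem_insert_iff, Set.mem_diff, Set.mem_setOf_eq]
  constructor
  · rintro (h | h | ⟨hq, hne⟩)
    · exact Or.inl h
    · exact Or.inr (Or.inl h)
    · refine Or.inr (Or.inr ⟨hq, ?_, ?_⟩) <;> intro hc <;> apply hne <;> simp [hc]
  · rintro (h | h | ⟨hq, h1, h2⟩)
    · exact Or.inl h
    · exact Or.inr (Or.inl h)
    · refine Or.inr (Or.inr ⟨hq, ?_⟩)
      intro hc; rcases hc with hc | hc
      · exact h1 hc
      · exact h2 hc

lemma wR {r : σ} {u v : ZMod n × ℕ} :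
    At.R r u v ∈ cogwheel σ n (pathCQ σ m ρ FL TL) cT cF ↔
      ∃ (j : ZMod n) (i : ℕ), i < m ∧ r = ρ i ∧ u = nrm n cT cF j i ∧ v = nrm n cT cF j (i+1) := by
  constructor
  · rintro ⟨j, b, hb, heq⟩
    cases b with
    | F a => simp [At.map] at heq
    | T a => simp [At.map] at heq
    | A a => simp [At.map] at heq
    | R r' x y =>
      simp only [At.map, At.R.injEq] at heq
      obtain ⟨hr, hu, hv⟩ := heq
      rcases mem_contactCopy.mp hb with h | h | ⟨hq, -, -⟩
      · exact absurd h (by simp)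
      · exact absurd h (by simp)
      · rcases hq with ⟨i, him, hRe⟩ | ⟨i, -, hRe⟩ | ⟨i, -, hRe⟩
        · obtain ⟨h1, h2, h3⟩ := At.R.injEq .. ▸ hRe
          exact ⟨j, i, him, hr.trans h1, by rw [hu, h2]; rfl, by rw [hv, h3]; rfl⟩
        · exact absurd hRe (by simp)
        · exact absurd hRe (by simp)
  · rintro ⟨j, i, him, hr, hu, hv⟩
    refine ⟨j, At.R (ρ i) i (i+1), ?_, ?_⟩
    · exact mem_contactCopy.mpr (Or.inr (Or.inr ⟨Or.inl ⟨i, him, rfl⟩, by simp, by simp⟩))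
    · simp [At.map, hr, hu, hv, nrm]

lemma wF {u : ZMod n × ℕ} :
    At.F u ∈ cogwheel σ n (pathCQ σ m ρ FL TL) cT cF ↔
      ∃ (j : ZMod n) (f : ℕ), f ∈ FL ∧ f ≠ cF j ∧ u = nrm n cT cF j f := by
  constructor
  · rintro ⟨j, b, hb, heq⟩
    cases b with
    | T a => simp [At.map] at heq
    | A a => simp [At.map] at heq
    | R r' x y => simp [At.map] at heq
    | F a =>
      simp only [At.map, At.F.injEq] at heq
      rcases mem_contactCopy.mp hb with h | h | ⟨hq, -, hne⟩
      · exact absurd h (by simp)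
      · exact absurd h (by simp)
      · rcases hq with ⟨i, -, hRe⟩ | ⟨i, hiFL, hRe⟩ | ⟨i, -, hRe⟩
        · exact absurd hRe (by simp)
        · obtain h1 := At.F.injEq .. ▸ hRe
          refine ⟨j, a, h1 ▸ hiFL, ?_, by rw [heq]; rfl⟩
          intro hc; exact hne (by rw [hc])
        · exact absurd hRe (by simp)
  · rintro ⟨j, f, hf, hne, hu⟩
    refine ⟨j, At.F f, ?_, ?_⟩
    · exact mem_contactCopy.mpr (Or.inr (Or.inr ⟨Or.inr (Or.inl ⟨f, hf, rfl⟩), by simp,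
        by simp [hne]⟩))
    · simp [At.map, hu, nrm]

lemma wT {u : ZMod n × ℕ} :
    At.T u ∈ cogwheel σ n (pathCQ σ m ρ FL TL) cT cF ↔
      ∃ (j : ZMod n) (t : ℕ), t ∈ TL ∧ t ≠ cT j ∧ u = nrm n cT cF j t := by
  constructor
  · rintro ⟨j, b, hb, heq⟩
    cases b with
    | F a => simp [At.map] at heq
    | A a => simp [At.map] at heq
    | R r' x y => simp [At.map] at heq
    | T a =>
      simp only [At.map, At.T.injEq] at heq
      rcases mem_contactCopy.mp hb with h | h | ⟨hq, hne, -⟩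
      · exact absurd h (by simp)
      · exact absurd h (by simp)
      · rcases hq with ⟨i, -, hRe⟩ | ⟨i, -, hRe⟩ | ⟨i, hiTL, hRe⟩
        · exact absurd hRe (by simp)
        · exact absurd hRe (by simp)
        · obtain h1 := At.T.injEq .. ▸ hRe
          refine ⟨j, a, h1 ▸ hiTL, ?_, by rw [heq]; rfl⟩
          intro hc; exact hne (by rw [hc])
  · rintro ⟨j, t, ht, hne, hu⟩
    refine ⟨j, At.T t, ?_, ?_⟩
    · exact mem_contactCopy.mpr (Or.inr (Or.inr ⟨Or.inr (Or.inr ⟨t, ht, rfl⟩),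
        by simp [hne], by simp⟩))
    · simp [At.map, hu, nrm]

lemma wA {u : ZMod n × ℕ} :
    At.A u ∈ cogwheel σ n (pathCQ σ m ρ FL TL) cT cF ↔
      ∃ j : ZMod n, u = nrm n cT cF j (cT j) ∨ u = nrm n cT cF j (cF j) := by
  constructor
  · rintro ⟨j, b, hb, heq⟩
    cases b with
    | F a => simp [At.map] at heq
    | T a => simp [At.map] at heq
    | R r' x y => simp [At.map] at heq
    | A a =>
      simp only [At.map, At.A.injEq] at heq
      rcases mem_contactCopy.mp hb with h | h | ⟨hq, -, -⟩
      · obtain h1 := At.A.injEq .. ▸ h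
        exact ⟨j, Or.inl (by rw [heq, h1]; rfl)⟩
      · obtain h1 := At.A.injEq .. ▸ h
        exact ⟨j, Or.inr (by rw [heq, h1]; rfl)⟩
      · rcases hq with ⟨i, -, hRe⟩ | ⟨i, -, hRe⟩ | ⟨i, -, hRe⟩ <;> exact absurd hRe (by simp)
  · rintro ⟨j, hu | hu⟩
    · exact ⟨j, At.A (cT j), mem_contactCopy.mpr (Or.inl rfl), by simp [At.map, hu, nrm]⟩
    · exact ⟨j, At.A (cF j), mem_contactCopy.mpr (Or.inr (Or.inl rfl)), by simp [At.map, hu, nrm]⟩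

section Contacts

variable {c : ZMod n × ℕ → Bool}

lemma contact_nrm (hdisj : ∀ i, ¬ (i ∈ FL ∧ i ∈ TL)) (hcT : ∀ j, cT j ∈ TL)
    (hcF : ∀ j, cF j ∈ FL) (j : ZMod n) : nrm n cT cF j (cF j) = (j, cF j) :=
  nrm_eval (FL_ne_cT hdisj hcT (hcF j) j)

lemma noF_contact (hdisj : ∀ i, ¬ (i ∈ FL ∧ i ∈ TL)) (hcT : ∀ j, cT j ∈ TL)
    (hcF : ∀ j, cF j ∈ FL) (j : ZMod n) :
    At.F ((j, cF j) : ZMod n × ℕ) ∉ cogwheel σ n (pathCQ σ m ρ FL TL) cT cF := by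
  intro h
  obtain ⟨j', f, hf, hne, hu⟩ := wF.mp h
  rw [nrm_eval (FL_ne_cT hdisj hcT hf j')] at hu
  obtain ⟨h1, h2⟩ := Prod.mk.injEq .. ▸ hu
  exact hne (by rw [← h2, h1])

lemma noT_contact (hdisj : ∀ i, ¬ (i ∈ FL ∧ i ∈ TL)) (hcT : ∀ j, cT j ∈ TL)
    (hcF : ∀ j, cF j ∈ FL) (j : ZMod n) :
    At.T ((j, cF j) : ZMod n × ℕ) ∉ cogwheel σ n (pathCQ σ m ρ FL TL) cT cF := by
  intro h
  obtain ⟨j', t, ht, hne, hu⟩ := wT.mp h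
  rw [nrm_eval (cT := cT) (cF := cF) hne] at hu
  obtain ⟨h1, h2⟩ := Prod.mk.injEq .. ▸ hu
  exact hdisj t ⟨h2 ▸ hcF j, ht⟩

lemma A_contact (hdisj : ∀ i, ¬ (i ∈ FL ∧ i ∈ TL)) (hcT : ∀ j, cT j ∈ TL)
    (hcF : ∀ j, cF j ∈ FL) (j : ZMod n) :
    At.A ((j, cF j) : ZMod n × ℕ) ∈ cogwheel σ n (pathCQ σ m ρ FL TL) cT cF :=
  wA.mpr ⟨j, Or.inr (contact_nrm hdisj hcT hcF j).symm⟩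

lemma undec_contact (hdisj : ∀ i, ¬ (i ∈ FL ∧ i ∈ TL)) (hcT : ∀ j, cT j ∈ TL)
    (hcF : ∀ j, cF j ∈ FL) (j : ZMod n) :
    undecided (cogwheel σ n (pathCQ σ m ρ FL TL) cT cF) (j, cF j) :=
  ⟨A_contact hdisj hcT hcF j, noF_contact hdisj hcT hcF j, noT_contact hdisj hcT hcF j⟩

lemma TS_contact (hdisj : ∀ i, ¬ (i ∈ FL ∧ i ∈ TL)) (hcT : ∀ j, cT j ∈ TL)
    (hcF : ∀ j, cF j ∈ FL) (j : ZMod n) :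
    (minModel (cogwheel σ n (pathCQ σ m ρ FL TL) cT cF) c).TS (j, cF j) ↔
      c (j, cF j) = false := by
  constructor
  · rintro (h | ⟨-, h⟩)
    · exact absurd h (noT_contact hdisj hcT hcF j)
    · exact h
  · intro h; exact Or.inr ⟨undec_contact hdisj hcT hcF j, h⟩

lemma FS_contact (hdisj : ∀ i, ¬ (i ∈ FL ∧ i ∈ TL)) (hcT : ∀ j, cT j ∈ TL)
    (hcF : ∀ j, cF j ∈ FL) (j : ZMod n) :
    (minModel (cogwheel σ n (pathCQ σ m ρ FL TL) cT cF) c).FS (j, cF j) ↔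
      c (j, cF j) = true := by
  constructor
  · rintro (h | ⟨-, h⟩)
    · exact absurd h (noF_contact hdisj hcT hcF j)
    · exact h
  · intro h; exact Or.inr ⟨undec_contact hdisj hcT hcF j, h⟩

/-- under all-contacts-T, `FS` at a normalized node forces an `F`-position. -/
lemma FS_nu (hdisj : ∀ i, ¬ (i ∈ FL ∧ i ∈ TL)) (hcT : ∀ j, cT j ∈ TL)
    (hcF : ∀ j, cF j ∈ FL)
    (hT : ∀ j : ZMod n, c (j, cF j) = false) {k : ZMod n} {p : ℕ}
    (h : (minModel (cogwheel σ n (pathCQ σ m ρ FL TL) cT cF) c).FS (nrm n cT cF k p)) :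
    p ∈ FL ∧ p ≠ cF k ∧ p ≠ cT k := by
  rcases h with h | ⟨⟨hA, -, -⟩, hc⟩
  · obtain ⟨j, f, hf, hne, hu⟩ := wF.mp h
    rcases nrm_cases hu with ⟨h1, h2⟩ | ⟨h1, h2, h3, h4⟩ | ⟨h1, h2, h3, h4⟩
    · subst h1; subst h2
      exact ⟨hf, fun hc => hne hc, FL_ne_cT hdisj hcT hf k⟩
    · rw [h3] at hne; exact absurd h4 hne
    · exact absurd (h2 ▸ hf) (fun hmem => hdisj _ ⟨hmem, hcT j⟩)
  · exfalso
    obtain ⟨j, hu | hu⟩ := wA.mp hA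
    · rw [nrm_eval_cT] at hu
      rw [hu, hT (j-1)] at hc; exact absurd hc (by simp)
    · rw [contact_nrm hdisj hcT hcF j] at hu
      rw [hu, hT j] at hc; exact absurd hc (by simp)

/-- under all-contacts-F, `TS` at a normalized node forces a `T`-position. -/
lemma TS_nu (hdisj : ∀ i, ¬ (i ∈ FL ∧ i ∈ TL)) (hcT : ∀ j, cT j ∈ TL)
    (hcF : ∀ j, cF j ∈ FL)
    (hF : ∀ j : ZMod n, c (j, cF j) = true) {k : ZMod n} {p : ℕ}
    (h : (minModel (cogwheel σ n (pathCQ σ m ρ FL TL) cT cF) c).TS (nrm n cT cF k p)) :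
    p ∈ TL ∧ p ≠ cT k ∧ p ≠ cF k := by
  rcases h with h | ⟨⟨hA, -, -⟩, hc⟩
  · obtain ⟨j, t, ht, hne, hu⟩ := wT.mp h
    rcases nrm_cases hu with ⟨h1, h2⟩ | ⟨h1, h2, h3, h4⟩ | ⟨h1, h2, h3, h4⟩
    · subst h1; subst h2
      refine ⟨ht, fun hc => hne hc, fun hc => hdisj _ ⟨hc ▸ hcF k, ht⟩⟩
    · exact (hdisj (cF (k-1)) ⟨hcF (k-1), h4 ▸ ht⟩).elim
    · exact absurd h2 hne
  · exfalso
    obtain ⟨j, hu | hu⟩ := wA.mp hA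
    · rw [nrm_eval_cT] at hu
      rw [hu, hF (j-1)] at hc; exact absurd hc (by simp)
    · rw [contact_nrm hdisj hcT hcF j] at hu
      rw [hu, hF j] at hc; exact absurd hc (by simp)

end Contacts

section Core

variable {K : ℕ → ZMod n} {Q : ℕ → ℕ}

/-- step types of the walk -/
def SameS (K : ℕ → ZMod n) (Q : ℕ → ℕ) (i : ℕ) : Prop :=
  K (i+1) = K i ∧ Q (i+1) = Q i + 1

def CrossS (cT cF : ZMod n → ℕ) (K : ℕ → ZMod n) (Q : ℕ → ℕ) (i : ℕ) : Prop :=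
  K (i+1) = K i + 1 ∧ Q i + 1 = cF (K i) ∧ Q (i+1) = cT (K (i+1))

def BackS (cT cF : ZMod n → ℕ) (K : ℕ → ZMod n) (Q : ℕ → ℕ) (i : ℕ) : Prop :=
  K (i+1) = K i - 1 ∧ Q i + 1 = cT (K i) ∧ Q (i+1) = cF (K (i+1))

lemma noBack
    (hc1 : ∀ j, cT j < cF j) (hc2 : ∀ j, cT (j + 1) < cF j)
    (hQm : Q m ≤ m)
    (htr : ∀ i, i < m → SameS K Q i ∨ CrossS cT cF K Q i ∨ BackS cT cF K Q i)
    {i₀ : ℕ} (hi₀ : i₀ < m) (hB : BackS cT cF K Q i₀) : False := by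
  obtain ⟨hK, hQ1, hQ2⟩ := hB
  -- downward: everything before i₀ is in the same copy with increasing positions
  have down : ∀ d, d ≤ i₀ → K (i₀ - d) = K i₀ ∧ Q (i₀ - d) + d = Q i₀ := by
    intro d
    induction d with
    | zero => intro _; simp
    | succ d ih =>
      intro hd
      obtain ⟨ihK, ihQ⟩ := ih (by omega)
      have hi : i₀ - (d+1) + 1 = i₀ - d := by omega
      have hlt : i₀ - (d+1) < m := by omega
      rcases htr _ hlt with ⟨h1, h2⟩ | ⟨h1, h2, h3⟩ | ⟨h1, h2, h3⟩
      · rw [hi] at h1 h2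
        exact ⟨by rw [← h1, ihK], by omega⟩
      · rw [hi] at h1 h3
        exfalso
        rw [ihK] at h3
        have : Q (i₀ - d) + d = Q i₀ := ihQ
        have : Q (i₀ - d) ≤ Q i₀ := by omega
        omega
      · rw [hi] at h1 h3
        exfalso
        rw [ihK] at h3
        have hlt1 : cT (K i₀) < cF (K i₀) := hc1 _
        have : Q (i₀ - d) ≤ Q i₀ := by omega
        omega
  have hQi₀ : i₀ ≤ Q i₀ := by
    obtain ⟨-, h⟩ := down i₀ le_rfl
    omega
  -- upward: everything after i₀+1 stays in copy K i₀ - 1 with increasing positions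
  have up : ∀ d, i₀ + 1 + d ≤ m →
      K (i₀ + 1 + d) = K i₀ - 1 ∧ Q (i₀ + 1 + d) = cF (K i₀ - 1) + d := by
    intro d
    induction d with
    | zero => intro _; simpa using ⟨hK, hQ2 ▸ by rw [hK]⟩
    | succ d ih =>
      intro hd
      obtain ⟨ihK, ihQ⟩ := ih (by omega)
      have hlt : i₀ + 1 + d < m := by omega
      have hi : i₀ + 1 + d + 1 = i₀ + 1 + (d + 1) := by omega
      rcases htr _ hlt with ⟨h1, h2⟩ | ⟨h1, h2, h3⟩ | ⟨h1, h2, h3⟩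
      · rw [hi] at h1 h2
        exact ⟨by rw [h1, ihK], by omega⟩
      · exfalso; rw [ihK] at h2; omega
      · exfalso
        rw [ihK] at h2
        have := hc1 (K i₀ - 1)
        omega
  obtain ⟨-, hfin⟩ := up (m - i₀ - 1) (by omega)
  rw [show i₀ + 1 + (m - i₀ - 1) = m by omega] at hfin
  have hc2' : cT (K i₀) < cF (K i₀ - 1) := by
    have := hc2 (K i₀ - 1)
    rwa [sub_add_cancel] at this
  omega

lemma dicho
    (hc1 : ∀ j, cT j < cF j) (hc2 : ∀ j, cT (j + 1) < cF j)
    (hQm : Q m ≤ m)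
    (htr : ∀ i, i < m → SameS K Q i ∨ CrossS cT cF K Q i ∨ BackS cT cF K Q i) :
    ∀ i, i < m → SameS K Q i ∨ CrossS cT cF K Q i := by
  intro i hi
  rcases htr i hi with h | h | h
  · exact Or.inl h
  · exact Or.inr h
  · exact absurd h (fun hB => noBack hc1 hc2 hQm htr hi hB)

/-- no node sits at its own position: all-contacts-T version -/
lemma noFixT (hdisj : ∀ i, ¬ (i ∈ FL ∧ i ∈ TL)) (hcT : ∀ j, cT j ∈ TL)
    (hcF : ∀ j, cF j ∈ FL) (hFLm : FL ⊆ Set.Iic m)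
    (hc1 : ∀ j, cT j < cF j)
    (htr2 : ∀ i, i < m → SameS K Q i ∨ CrossS cT cF K Q i)
    (hFr : ∀ f ∈ FL, Q f ∈ FL ∧ Q f ≠ cF (K f))
    {x : ℕ} (hx : x ≤ m) (hQx : Q x = x) : False := by
  set cc := cF (K x) with hcc
  have hccFL : cc ∈ FL := hcF _
  have hccm : cc ≤ m := hFLm hccFL
  rcases le_or_gt x cc with hxc | hxc
  · -- climb from x to cc
    have up : ∀ d, x + d ≤ cc → K (x + d) = K x ∧ Q (x + d) = x + d := by
      intro d
      induction d with
      | zero => intro _; simpa using hQx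
      | succ d ih =>
        intro hd
        obtain ⟨ihK, ihQ⟩ := ih (by omega)
        have hlt : x + d < m := by omega
        rcases htr2 _ hlt with ⟨h1, h2⟩ | ⟨h1, h2, h3⟩
        · constructor
          · rw [show x + (d+1) = x + d + 1 by omega, h1, ihK]
          · rw [show x + (d+1) = x + d + 1 by omega, h2, ihQ]
        · exfalso
          rw [ihK, ihQ, ← hcc] at h2
          -- x + d + 1 = cc, and node cc would be at a cT position
          have hccnode : x + d + 1 = cc := h2
          have : Q (x + d + 1) = cT (K (x + d + 1)) := h3
          have hQcc := (hFr cc hccFL).1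
          rw [← hccnode] at hQcc
          rw [this] at hQcc
          exact hdisj _ ⟨hQcc, hcT _⟩
    obtain ⟨hKc, hQc⟩ := up (cc - x) (by omega)
    rw [show x + (cc - x) = cc by omega] at hKc hQc
    exact (hFr cc hccFL).2 (by rw [hQc, hKc, ← hcc])
  · -- descend from x to cc
    have down : ∀ d, d ≤ x - cc → K (x - d) = K x ∧ Q (x - d) = x - d := by
      intro d
      induction d with
      | zero => intro _; simpa using hQx
      | succ d ih =>
        intro hd
        obtain ⟨ihK, ihQ⟩ := ih (by omega)
        have hi : x - (d+1) + 1 = x - d := by omega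
        have hlt : x - (d+1) < m := by omega
        rcases htr2 _ hlt with ⟨h1, h2⟩ | ⟨h1, h2, h3⟩
        · rw [hi] at h1 h2
          exact ⟨by rw [← h1, ihK], by omega⟩
        · exfalso
          rw [hi] at h3
          rw [ihK] at h3
          have h4 := hc1 (K x)
          rw [← hcc] at h4
          rw [ihQ] at h3
          omega
    obtain ⟨hKc, hQc⟩ := down (x - cc) (by omega)
    rw [show x - (x - cc) = cc by omega] at hKc hQc
    exact (hFr cc hccFL).2 (by rw [hQc, hKc, ← hcc])

/-- no node sits at its own position: all-contacts-F version -/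
lemma noFixF (hdisj : ∀ i, ¬ (i ∈ FL ∧ i ∈ TL)) (hcT : ∀ j, cT j ∈ TL)
    (hcF : ∀ j, cF j ∈ FL) (hTLm : TL ⊆ Set.Iic m)
    (hc1 : ∀ j, cT j < cF j)
    (htr2 : ∀ i, i < m → SameS K Q i ∨ CrossS cT cF K Q i)
    (hTr : ∀ t ∈ TL, Q t ∈ TL ∧ Q t ≠ cT (K t))
    {x : ℕ} (hx : x ≤ m) (hQx : Q x = x) : False := by
  set tt := cT (K x) with htt
  have httTL : tt ∈ TL := hcT _
  have httm : tt ≤ m := hTLm httTL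
  rcases le_or_gt x tt with hxc | hxc
  · have up : ∀ d, x + d ≤ tt → K (x + d) = K x ∧ Q (x + d) = x + d := by
      intro d
      induction d with
      | zero => intro _; simpa using hQx
      | succ d ih =>
        intro hd
        obtain ⟨ihK, ihQ⟩ := ih (by omega)
        have hlt : x + d < m := by omega
        rcases htr2 _ hlt with ⟨h1, h2⟩ | ⟨h1, h2, h3⟩
        · constructor
          · rw [show x + (d+1) = x + d + 1 by omega, h1, ihK]
          · rw [show x + (d+1) = x + d + 1 by omega, h2, ihQ]
        · exfalso
          rw [ihK, ihQ] at h2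
          have h4 := hc1 (K x)
          rw [← htt] at h4
          omega
    obtain ⟨hKc, hQc⟩ := up (tt - x) (by omega)
    rw [show x + (tt - x) = tt by omega] at hKc hQc
    exact (hTr tt httTL).2 (by rw [hQc, hKc, ← htt])
  · have down : ∀ d, d ≤ x - tt → K (x - d) = K x ∧ Q (x - d) = x - d := by
      intro d
      induction d with
      | zero => intro _; simpa using hQx
      | succ d ih =>
        intro hd
        obtain ⟨ihK, ihQ⟩ := ih (by omega)
        have hi : x - (d+1) + 1 = x - d := by omega
        have hlt : x - (d+1) < m := by omega
        rcases htr2 _ hlt with ⟨h1, h2⟩ | ⟨h1, h2, h3⟩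
        · rw [hi] at h1 h2
          exact ⟨by rw [← h1, ihK], by omega⟩
        · exfalso
          rw [hi] at h3
          rw [ihK] at h3
          rw [ihQ] at h3
          omega
    obtain ⟨hKc, hQc⟩ := down (x - tt) (by omega)
    rw [show x - (x - tt) = tt by omega] at hKc hQc
    exact (hTr tt httTL).2 (by rw [hQc, hKc, ← htt])

end Core

section Core2

variable {K : ℕ → ZMod n} {Q : ℕ → ℕ}

/-- all-contacts-T core contradiction -/
lemma coreT (hdisj : ∀ i, ¬ (i ∈ FL ∧ i ∈ TL)) (hcT : ∀ j, cT j ∈ TL)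
    (hcF : ∀ j, cF j ∈ FL) (hFLm : FL ⊆ Set.Iic m)
    (hc1 : ∀ j, cT j < cF j) (hc2 : ∀ j, cT (j + 1) < cF j)
    (hQb : ∀ i, i < m → Q i < m) (hQm : Q m ≤ m)
    (htr : ∀ i, i < m → SameS K Q i ∨ CrossS cT cF K Q i ∨ BackS cT cF K Q i)
    (hFr : ∀ f ∈ FL, Q f ∈ FL ∧ Q f ≠ cF (K f)) : False := by
  have htr2 := dicho hc1 hc2 hQm htr
  have hQle : ∀ x, x ≤ m → Q x ≤ m := by
    intro x hx
    rcases Nat.lt_or_ge x m with h | h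
    · exact le_of_lt (hQb x h)
    · have : x = m := by omega
      rw [this]; exact hQm
  set M : Set ℕ := {u | ∃ i, i < m ∧ u = i + 1 ∧ CrossS cT cF K Q i} with hM
  have markNotFL : ∀ u ∈ M, u ∉ FL := by
    rintro u ⟨i, him, rfl, hc⟩ huFL
    have h1 := (hFr _ huFL).1
    rw [hc.2.2] at h1
    exact hdisj _ ⟨h1, hcT _⟩
  set g : ℕ → ℕ := fun x =>
    if x ≤ m then (if x ∈ M then Q (x - 1) + 1 else Q x) else Q m + (x - m) with hg
  have hgmark : ∀ u ∈ M, g u = Q (u - 1) + 1 := by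
    rintro u ⟨i, him, rfl, hc⟩
    have : i + 1 ≤ m := by omega
    simp only [hg, if_pos this, if_pos (show i + 1 ∈ M from ⟨i, him, rfl, hc⟩)]
  have hgnm : ∀ x, x ≤ m → x ∉ M → g x = Q x := by
    intro x hx hxm
    simp only [hg, if_pos hx, if_neg hxm]
  have h1 : ∀ x, x ∉ M → g (x + 1) = g x + 1 := by
    intro x hx
    rcases Nat.lt_or_ge (x + 1) (m + 1) with hle | hgt
    · have hxm : x + 1 ≤ m := by omega
      by_cases hmem : x + 1 ∈ M
      · rw [hgmark _ hmem, hgnm x (by omega) hx]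
        simp
      · rw [hgnm _ hxm hmem, hgnm x (by omega) hx]
        have hxlt : x < m := by omega
        rcases htr2 x hxlt with ⟨-, h⟩ | hcr
        · rw [h]
        · exact absurd (⟨x, hxlt, rfl, hcr⟩ : x + 1 ∈ M) hmem
    · rcases Nat.lt_or_ge x (m + 1) with hxle | hxgt
      · have hxm : x = m := by omega
        rw [hgnm x (by omega) hx, hxm]
        have hd : g (m + 1) = Q m + (m + 1 - m) := by
          simp only [hg]
          rw [if_neg (by omega : ¬ m + 1 ≤ m)]
        rw [hd, show m + 1 - m = 1 by omega]
      · simp only [hg, if_neg (by omega : ¬ x + 1 ≤ m), if_neg (by omega : ¬ x ≤ m)]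
        omega
  have h2 : ∀ x, x ≤ m → g x ≤ m := by
    intro x hx
    by_cases hmem : x ∈ M
    · rw [hgmark _ hmem]
      obtain ⟨i, him, rfl, -⟩ := hmem
      have : i + 1 - 1 = i := by omega
      rw [this]
      exact hQb i him
    · rw [hgnm _ hx hmem]; exact hQle x hx
  have h3 : ∀ x, m < x → g x < x := by
    intro x hxm
    have hd : g x = Q m + (x - m) := by
      simp only [hg]
      rw [if_neg (by omega : ¬ x ≤ m)]
    rw [hd]
    have : Q m ≠ m := fun h => noFixT hdisj hcT hcF hFLm hc1 htr2 hFr le_rfl h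
    omega
  obtain ⟨u, huM, p, hp, hper⟩ := slide h1 h2 h3
  -- the ghost orbit of u stays in FL and returns to u
  have chain : ∀ jj, jj < p → g^[jj + 1] u ∈ FL := by
    intro jj
    induction jj with
    | zero =>
      intro _
      obtain ⟨i, him, rfl, hcr⟩ := huM
      have h0 : g (i + 1) = Q i + 1 := by
        rw [hgmark _ ⟨i, him, rfl, hcr⟩]; simp
      rw [zero_add, Function.iterate_one, h0, hcr.2.1]
      exact hcF _
    | succ jj ih =>
      intro hjj
      have hy : g^[jj + 1] u ∈ FL := ih (by omega)
      have hyM : g^[jj + 1] u ∉ M := fun hmem => markNotFL _ hmem hy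
      rw [Function.iterate_succ_apply', hgnm _ (hFLm hy) hyM]
      exact (hFr _ hy).1
  have hlast : g^[p] u ∈ FL := by
    have := chain (p - 1) (by omega)
    rwa [show p - 1 + 1 = p by omega] at this
  rw [hper] at hlast
  exact markNotFL u huM hlast

/-- all-contacts-F core contradiction -/
lemma coreF (hdisj : ∀ i, ¬ (i ∈ FL ∧ i ∈ TL)) (hcT : ∀ j, cT j ∈ TL)
    (hcF : ∀ j, cF j ∈ FL) (hTLm : TL ⊆ Set.Iic m) (hm : 0 < m)
    (hc1 : ∀ j, cT j < cF j) (hc2 : ∀ j, cT (j + 1) < cF j)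
    (hQb : ∀ i, i < m → Q i < m) (hQm : Q m ≤ m)
    (htr : ∀ i, i < m → SameS K Q i ∨ CrossS cT cF K Q i ∨ BackS cT cF K Q i)
    (hTr : ∀ t ∈ TL, Q t ∈ TL ∧ Q t ≠ cT (K t)) : False := by
  have htr2 := dicho hc1 hc2 hQm htr
  have hQle : ∀ x, x ≤ m → Q x ≤ m := by
    intro x hx
    rcases Nat.lt_or_ge x m with h | h
    · exact le_of_lt (hQb x h)
    · have : x = m := by omega
      rw [this]; exact hQm
  have hQ0 : 0 < Q 0 := by
    have : Q 0 ≠ 0 := fun h => noFixF hdisj hcT hcF hTLm hc1 htr2 hTr (by omega) h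
    omega
  set M : Set ℕ := {u | ∃ i, i < m ∧ u = i + 1 ∧ CrossS cT cF K Q i} with hM
  have markNotTL : ∀ u ∈ M, u ∉ TL := by
    rintro u ⟨i, him, rfl, hc⟩ huTL
    exact (hTr _ huTL).2 hc.2.2
  set M' : Set ℕ := {x | ∃ u ∈ M, u ≤ m ∧ x + u = m} with hM'
  set g : ℕ → ℕ := fun x => if x ≤ m then m - Q (m - x) else (m - Q 0) + (x - m) with hg
  have h1 : ∀ x, x ∉ M' → g (x + 1) = g x + 1 := by
    intro x hx
    rcases Nat.lt_or_ge (x + 1) (m + 1) with hle | hgt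
    · have hxm : x + 1 ≤ m := by omega
      set y := m - x with hy
      have hy1 : 1 ≤ y := by omega
      have hym : y ≤ m := by omega
      have hyM : y ∉ M := by
        intro hmem
        exact hx ⟨y, hmem, hym, by omega⟩
      have hylt : y - 1 < m := by omega
      have hQy : Q y = Q (y - 1) + 1 := by
        rcases htr2 (y - 1) hylt with ⟨-, h⟩ | hcr
        · rw [show y - 1 + 1 = y by omega] at h
          exact h
        · exfalso
          apply hyM
          exact ⟨y - 1, hylt, by omega, hcr⟩
      simp only [hg, if_pos hxm, if_pos (show x ≤ m by omega)]
      rw [show m - (x + 1) = y - 1 by omega, show m - x = y from rfl]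
      have hQym : Q y ≤ m := hQle y hym
      omega
    · rcases Nat.lt_or_ge x (m + 1) with hxle | hxgt
      · have hxm : x = m := by omega
        rw [hxm]
        have hd1 : g (m + 1) = (m - Q 0) + (m + 1 - m) := by
          simp only [hg]
          rw [if_neg (by omega : ¬ m + 1 ≤ m)]
        have hd2 : g m = m - Q (m - m) := by
          simp only [hg]
          rw [if_pos (le_refl m)]
        rw [hd1, hd2, show m - m = 0 by omega, show m + 1 - m = 1 by omega]
      · simp only [hg, if_neg (by omega : ¬ x + 1 ≤ m), if_neg (by omega : ¬ x ≤ m)]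
        omega
  have h2 : ∀ x, x ≤ m → g x ≤ m := by
    intro x hx
    have hd : g x = m - Q (m - x) := by
      simp only [hg]
      rw [if_pos hx]
    rw [hd]
    omega
  have h3 : ∀ x, m < x → g x < x := by
    intro x hxm
    have hd : g x = (m - Q 0) + (x - m) := by
      simp only [hg]
      rw [if_neg (by omega : ¬ x ≤ m)]
    rw [hd]
    omega
  obtain ⟨x', hx'M, p, hp, hper⟩ := slide h1 h2 h3
  obtain ⟨u, huM, hum, hxu⟩ := hx'M
  -- transfer periodicity to Q
  have hconj : ∀ jj, g^[jj] x' = m - Q^[jj] u ∧ Q^[jj] u ≤ m := by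
    intro jj
    induction jj with
    | zero => simpa using by omega
    | succ jj ih =>
      obtain ⟨ih1, ih2⟩ := ih
      rw [Function.iterate_succ_apply', Function.iterate_succ_apply', ih1]
      have hle : m - Q^[jj] u ≤ m := by omega
      constructor
      · simp only [hg, if_pos hle]
        rw [show m - (m - Q^[jj] u) = Q^[jj] u by omega]
      · exact hQle _ ih2
  have hQper : Q^[p] u = u := by
    obtain ⟨h1', h2'⟩ := hconj p
    rw [hper] at h1'
    omega
  -- the real orbit of u stays in TL
  have chain : ∀ jj, jj < p → Q^[jj + 1] u ∈ TL := by
    intro jj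
    induction jj with
    | zero =>
      intro _
      obtain ⟨i, him, rfl, hcr⟩ := huM
      rw [zero_add, Function.iterate_one, hcr.2.2]
      exact hcT _
    | succ jj ih =>
      intro hjj
      have hy : Q^[jj + 1] u ∈ TL := ih (by omega)
      rw [Function.iterate_succ_apply']
      exact (hTr _ hy).1
  have hlast : Q^[p] u ∈ TL := by
    have := chain (p - 1) (by omega)
    rwa [show p - 1 + 1 = p by omega] at this
  rw [hQper] at hlast
  exact markNotTL u huM hlast

end Core2

section NoHom

variable {c : ZMod n × ℕ → Bool}

lemma extract (hm : 0 < m)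
    (hsat : (minModel (cogwheel σ n (pathCQ σ m ρ FL TL) cT cF) c).satCQ
      (pathCQ σ m ρ FL TL)) :
    ∃ (h : ℕ → ZMod n × ℕ) (K : ℕ → ZMod n) (Q : ℕ → ℕ),
      (∀ a ∈ pathCQ σ m ρ FL TL,
        (minModel (cogwheel σ n (pathCQ σ m ρ FL TL) cT cF) c).satAt (At.map h a)) ∧
      (∀ i, i ≤ m → h i = nrm n cT cF (K i) (Q i)) ∧
      (∀ i, i < m → Q i < m) ∧ Q m ≤ m ∧
      (∀ i, i < m → SameS K Q i ∨ CrossS cT cF K Q i ∨ BackS cT cF K Q i) := by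
  obtain ⟨h, hh⟩ := hsat
  have hsel : ∀ i : ℕ, ∃ jp : ZMod n × ℕ, i < m →
      (jp.2 < m ∧ h i = nrm n cT cF jp.1 jp.2 ∧ h (i+1) = nrm n cT cF jp.1 (jp.2 + 1)) := by
    intro i
    by_cases hi : i < m
    · have hin : At.R (ρ i) (h i) (h (i+1)) ∈ cogwheel σ n (pathCQ σ m ρ FL TL) cT cF :=
        hh (At.R (ρ i) i (i+1)) (Or.inl ⟨i, hi, rfl⟩)
      obtain ⟨j, p, hpm, -, hu, hv⟩ := wR.mp hin
      exact ⟨(j, p), fun _ => ⟨hpm, hu, hv⟩⟩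
    · exact ⟨(0, 0), fun hlt => absurd hlt hi⟩
  choose JP hJP using hsel
  set K : ℕ → ZMod n := fun i => if i < m then (JP i).1 else (JP (m-1)).1 with hK
  set Q : ℕ → ℕ := fun i => if i < m then (JP i).2 else (JP (m-1)).2 + 1 with hQ
  have hKlt : ∀ i, i < m → K i = (JP i).1 := fun i hi => by simp only [hK, if_pos hi]
  have hQlt : ∀ i, i < m → Q i = (JP i).2 := fun i hi => by simp only [hQ, if_pos hi]
  have hKm : K m = (JP (m-1)).1 := by simp only [hK, if_neg (lt_irrefl m)]
  have hQm' : Q m = (JP (m-1)).2 + 1 := by simp only [hQ, if_neg (lt_irrefl m)]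
  refine ⟨h, K, Q, hh, ?_, ?_, ?_, ?_⟩
  · intro i hi
    rcases Nat.lt_or_ge i m with h1 | h1
    · rw [hKlt i h1, hQlt i h1]
      exact (hJP i h1).2.1
    · have him : i = m := by omega
      rw [him, hKm, hQm']
      have hm1 : m - 1 < m := by omega
      have h2 := (hJP (m-1) hm1).2.2
      rwa [show m - 1 + 1 = m by omega] at h2
  · intro i hi
    rw [hQlt i hi]
    exact (hJP i hi).1
  · rw [hQm']
    have hm1 : m - 1 < m := by omega
    have := (hJP (m-1) hm1).1
    omega
  · intro i hi
    rcases Nat.lt_or_ge (i+1) m with h1 | h1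
    · have e1 : h (i+1) = nrm n cT cF (K i) (Q i + 1) := by
        rw [hKlt i hi, hQlt i hi]
        exact (hJP i hi).2.2
      have e2 : h (i+1) = nrm n cT cF (K (i+1)) (Q (i+1)) := by
        rw [hKlt _ h1, hQlt _ h1]
        exact (hJP (i+1) h1).2.1
      have := nrm_cases (e1.symm.trans e2)
      rcases this with ⟨hj, ha⟩ | ⟨ha1, ha2, hj, ha3⟩ | ⟨ha1, ha2, hj, ha3⟩
      · exact Or.inl ⟨hj.symm, ha.symm⟩
      · refine Or.inr (Or.inr ⟨hj, ha1, ?_⟩)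
        rw [hj]; exact ha3
      · refine Or.inr (Or.inl ⟨?_, ?_, ha2⟩)
        · rw [hj]; rw [sub_add_cancel]
        · rw [hj]; exact ha3
    · have him : i + 1 = m := by omega
      have hieq : i = m - 1 := by omega
      refine Or.inl ⟨?_, ?_⟩
      · rw [him, hKm, hKlt i hi, hieq]
      · rw [him, hQm', hQlt i hi, hieq]

lemma noHomT (hm : 0 < m) (hdisj : ∀ i, ¬ (i ∈ FL ∧ i ∈ TL)) (hcT : ∀ j, cT j ∈ TL)
    (hcF : ∀ j, cF j ∈ FL) (hFLm : FL ⊆ Set.Iic m)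
    (hc1 : ∀ j, cT j < cF j) (hc2 : ∀ j, cT (j + 1) < cF j)
    (hTa : ∀ j : ZMod n, c (j, cF j) = false) :
    ¬ (minModel (cogwheel σ n (pathCQ σ m ρ FL TL) cT cF) c).satCQ (pathCQ σ m ρ FL TL) := by
  intro hsat
  obtain ⟨h, K, Q, hh, hrend, hQb, hQm, htr⟩ := extract hm hsat
  refine coreT hdisj hcT hcF hFLm hc1 hc2 hQb hQm htr ?_
  intro f hf
  have hfm : f ≤ m := hFLm hf
  have hFS : (minModel (cogwheel σ n (pathCQ σ m ρ FL TL) cT cF) c).FS (h f) :=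
    hh (At.F f) (Or.inr (Or.inl ⟨f, hf, rfl⟩))
  rw [hrend f hfm] at hFS
  obtain ⟨h1, h2, -⟩ := FS_nu hdisj hcT hcF hTa hFS
  exact ⟨h1, h2⟩

lemma noHomF (hm : 0 < m) (hdisj : ∀ i, ¬ (i ∈ FL ∧ i ∈ TL)) (hcT : ∀ j, cT j ∈ TL)
    (hcF : ∀ j, cF j ∈ FL) (hTLm : TL ⊆ Set.Iic m)
    (hc1 : ∀ j, cT j < cF j) (hc2 : ∀ j, cT (j + 1) < cF j)
    (hFa : ∀ j : ZMod n, c (j, cF j) = true) :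
    ¬ (minModel (cogwheel σ n (pathCQ σ m ρ FL TL) cT cF) c).satCQ (pathCQ σ m ρ FL TL) := by
  intro hsat
  obtain ⟨h, K, Q, hh, hrend, hQb, hQm, htr⟩ := extract hm hsat
  refine coreF hdisj hcT hcF hTLm hm hc1 hc2 hQb hQm htr ?_
  intro t ht
  have htm : t ≤ m := hTLm ht
  have hTS : (minModel (cogwheel σ n (pathCQ σ m ρ FL TL) cT cF) c).TS (h t) :=
    hh (At.T t) (Or.inr (Or.inr ⟨t, ht, rfl⟩))
  rw [hrend t htm] at hTS
  obtain ⟨h1, h2, -⟩ := TS_nu hdisj hcT hcF hFa hTS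
  exact ⟨h1, h2⟩

end NoHom

section Easy

variable {c : ZMod n × ℕ → Bool}

lemma sat_of_pair (hdisj : ∀ i, ¬ (i ∈ FL ∧ i ∈ TL)) (hcT : ∀ j, cT j ∈ TL)
    (hcF : ∀ j, cF j ∈ FL) {j : ZMod n}
    (hjF : c (j, cF j) = false) (hjT : c (j + 1, cF (j + 1)) = true) :
    (minModel (cogwheel σ n (pathCQ σ m ρ FL TL) cT cF) c).satCQ (pathCQ σ m ρ FL TL) := by
  refine ⟨fun v => nrm n cT cF (j + 1) v, ?_⟩
  intro a ha
  rcases ha with ⟨i, hi, rfl⟩ | ⟨f, hf, rfl⟩ | ⟨t, ht, rfl⟩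
  · exact wR.mpr ⟨j + 1, i, hi, rfl, rfl, rfl⟩
  · show (minModel (cogwheel σ n (pathCQ σ m ρ FL TL) cT cF) c).FS (nrm n cT cF (j + 1) f)
    by_cases hfc : f = cF (j + 1)
    · rw [hfc, contact_nrm hdisj hcT hcF]
      exact (FS_contact hdisj hcT hcF (j + 1)).mpr hjT
    · exact Or.inl (wF.mpr ⟨j + 1, f, hf, hfc, rfl⟩)
  · show (minModel (cogwheel σ n (pathCQ σ m ρ FL TL) cT cF) c).TS (nrm n cT cF (j + 1) t)
    by_cases htc : t = cT (j + 1)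
    · rw [htc, nrm_eval_cT, add_sub_cancel_right]
      exact (TS_contact hdisj hcT hcF j).mpr hjF
    · exact Or.inl (wT.mpr ⟨j + 1, t, ht, htc, rfl⟩)

lemma exists_pair (hn0 : n ≠ 0)
    (hT : ∃ j : ZMod n, c (j, cF j) = true)
    (hF : ∃ j : ZMod n, c (j, cF j) = false) :
    ∃ j : ZMod n, c (j, cF j) = false ∧ c (j + 1, cF (j + 1)) = true := by
  by_contra hcon
  push_neg at hcon
  obtain ⟨jT, hjT⟩ := hT
  obtain ⟨jF, hjF⟩ := hF
  have step : ∀ j : ZMod n, c (j, cF j) = false → c (j + 1, cF (j + 1)) = false := by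
    intro j hj
    have h1 := hcon j hj
    cases hb : c (j + 1, cF (j + 1)) with
    | false => rfl
    | true => exact absurd hb h1
  have all : ∀ k : ℕ, c (jF + (k : ZMod n), cF (jF + (k : ZMod n))) = false := by
    intro k
    induction k with
    | zero => simpa using hjF
    | succ k ih =>
      have h2 := step _ ih
      have hcast : (jF + (k : ZMod n)) + 1 = jF + ((k + 1 : ℕ) : ZMod n) := by
        push_cast; ring
      rwa [hcast] at h2
  haveI : NeZero n := ⟨hn0⟩
  have hfin := all (jT - jF).val
  have hval : jF + (((jT - jF).val : ℕ) : ZMod n) = jT := by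
    rw [ZMod.natCast_val, ZMod.cast_id]
    ring
  rw [hval] at hfin
  rw [hfin] at hjT
  exact absurd hjT (by simp)

end Easy

end Wheel

/-- Let `q` be a twinless path `2`-CQ whose first `T`-node
precedes its first `F`-node, and let `W` be an `n`-cogwheel for `q`, `n ≥ |q|`,
satisfying the cogwheel conditions (i) (`cT j ≺ cF j` inside each copy) and
(ii) (`cT (j+1) ≺ cF j` as nodes of `q`). Then for every minimal model `I` of
`cov_A` and `W`:  `I ⊭ q` iff either all contacts of `W` are in `T^I` or all
contacts of `W` are in `F^I`. -/
theorem statement_16 {σ : Type} (m n : ℕ) (ρ : ℕ → σ) (FL TL : Set ℕ)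
    (cT cF : ZMod n → ℕ)
    (hm : 0 < m) (hFL : FL ⊆ Set.Iic m) (hTL : TL ⊆ Set.Iic m)
    (hdisj : ∀ i, ¬ (i ∈ FL ∧ i ∈ TL))
    (hF2 : FL.Nontrivial) (hT2 : TL.Nontrivial)
    (ht1f1 : sInf TL < sInf FL)
    (hn : m ≤ n)
    (hcT : ∀ j, cT j ∈ TL) (hcF : ∀ j, cF j ∈ FL)
    (hcond1 : ∀ j, cT j < cF j)
    (hcond2 : ∀ j, cT (j + 1) < cF j) :
    ∀ c : ZMod n × ℕ → Bool,
      (¬ (minModel (cogwheel σ n (pathCQ σ m ρ FL TL) cT cF) c).satCQ (pathCQ σ m ρ FL TL) ↔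
        ((∀ j : ZMod n,
            (minModel (cogwheel σ n (pathCQ σ m ρ FL TL) cT cF) c).TS (j, cF j)) ∨
         (∀ j : ZMod n,
            (minModel (cogwheel σ n (pathCQ σ m ρ FL TL) cT cF) c).FS (j, cF j)))) := by
  intro c
  have hn0 : n ≠ 0 := by omega
  constructor
  · intro hnsat
    by_contra hcon
    push_neg at hcon
    obtain ⟨hnT, hnF⟩ := hcon
    obtain ⟨jT, hjT⟩ := hnT
    obtain ⟨jF, hjF⟩ := hnF
    have h1 : c (jT, cF jT) = true := by
      cases hb : c (jT, cF jT) with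
      | true => rfl
      | false => exact absurd ((TS_contact hdisj hcT hcF jT).mpr hb) hjT
    have h2 : c (jF, cF jF) = false := by
      cases hb : c (jF, cF jF) with
      | false => rfl
      | true => exact absurd ((FS_contact hdisj hcT hcF jF).mpr hb) hjF
    obtain ⟨j, hj1, hj2⟩ := exists_pair hn0 ⟨jT, h1⟩ ⟨jF, h2⟩
    exact hnsat (sat_of_pair hdisj hcT hcF hj1 hj2)
  · rintro (hT | hF) hsat
    · exact noHomT hm hdisj hcT hcF hFL hcond1 hcond2
        (fun j => (TS_contact hdisj hcT hcF j).mp (hT j)) hsat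
    · exact noHomF hm hdisj hcT hcF hTL hcond1 hcond2
        (fun j => (FS_contact hdisj hcT hcF j).mp (hF j)) hsat


end DS
end
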